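/- arXiv:2103.04317 — 10 statements merged into one kernel-verified Lean document; each statement's English description precedes it below -/
import Mathlib

section
/- Let H be a subgroup of S_n and χ an irreducible character of H. Then for every positive semidefinite n×n complex matrix A, the generalized matrix function d^H_χ(A) = Σ_{σ∈H} χ(σ) ∏_{t=1}^n A_{t,σ(t)} is a nonnegative real number. -/
open scoped ComplexOrder
open CategoryTheory
open Matrix

lemma sum_mulVec' {ι d : Type*} [Fintype d] (s : Finset ι) (M : ι → Matrix d d ℂ) (x : d → ℂ) :
    (∑ i ∈ s, M i) *ᵥ x = ∑ i ∈ s, M i *ᵥ x := by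
  ext j
  simp [Matrix.mulVec, dotProduct, Matrix.sum_apply, Finset.sum_mul]
  rw [Finset.sum_comm]

lemma dotProduct_sum' {ι d : Type*} [Fintype d] (s : Finset ι) (v : d → ℂ) (w : ι → d → ℂ) :
    v ⬝ᵥ (∑ i ∈ s, w i) = ∑ i ∈ s, v ⬝ᵥ w i := by
  simp [dotProduct, Finset.sum_apply, Finset.mul_sum]
  rw [Finset.sum_comm]

lemma key_quad_nonneg {G : Type*} [Group G] [Fintype G] {ι : Type*} [Fintype ι]
    [DecidableEq ι] (Z : G → Matrix ι ι ℂ)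
    (hmul : ∀ σ τ, Z σ * Z τ = Z (σ * τ)) (hstar : ∀ σ, (Z σ)ᴴ = Z σ⁻¹) (y : ι → ℂ) :
    0 ≤ star y ⬝ᵥ ((∑ σ : G, Z σ) *ᵥ y) := by
  set P := ∑ σ : G, Z σ with hPdef
  have h1 : Pᴴ = P := by
    rw [hPdef, conjTranspose_sum]
    simp_rw [hstar]
    exact Equiv.sum_comp (Equiv.inv G) Z
  have hP : Pᴴ * P = (Fintype.card G : ℂ) • P := by
    rw [h1, hPdef, Finset.sum_mul_sum]
    simp_rw [hmul]
    have : ∀ σ : G, ∑ τ : G, Z (σ * τ) = P := fun σ =>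
      Equiv.sum_comp (Equiv.mulLeft σ) Z
    rw [Finset.sum_congr rfl fun σ _ => this σ, Finset.sum_const, Finset.card_univ,
      ← Nat.cast_smul_eq_nsmul ℂ]
  have h2 : 0 ≤ star y ⬝ᵥ ((Pᴴ * P) *ᵥ y) := (posSemidef_conjTranspose_mul_self P).dotProduct_mulVec_nonneg y
  rw [hP, smul_mulVec, dotProduct_smul, smul_eq_mul] at h2
  have hc : 0 < (Fintype.card G : ℝ) := by positivity
  rw [Complex.le_def] at h2 ⊢
  constructor
  · have := h2.1
    simp only [Complex.zero_re, Complex.mul_re, Complex.natCast_re, Complex.natCast_im,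
      zero_mul, sub_zero] at this ⊢
    nlinarith [this]
  · have := h2.2
    simp only [Complex.zero_im, Complex.mul_im, Complex.natCast_re, Complex.natCast_im,
      zero_mul, add_zero] at this ⊢
    nlinarith [this]

lemma big_nonneg {G : Type*} [Group G] [Fintype G] {n d : ℕ}
    (φ : G →* Equiv.Perm (Fin n)) (U : G → Matrix (Fin d) (Fin d) ℂ)
    (hUmul : ∀ σ τ, U σ * U τ = U (σ * τ)) (hUstar : ∀ σ, (U σ)ᴴ = U σ⁻¹)
    (x : (Fin n → Fin n) → ℂ) :
    0 ≤ ∑ σ : G, (U σ⁻¹).trace * ∑ f : Fin n → Fin n,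
        star (x f) * x (fun t => f (φ σ t)) := by
  classical
  set Z : G → Matrix (Fin d × (Fin n → Fin n)) (Fin d × (Fin n → Fin n)) ℂ :=
    fun σ p q => star (U σ p.1 q.1) * (if q.2 = fun t => p.2 (φ σ t) then 1 else 0) with hZdef
  have hZmul : ∀ σ τ, Z σ * Z τ = Z (σ * τ) := by
    intro σ τ
    ext ⟨j, f⟩ ⟨k, g⟩
    rw [Matrix.mul_apply]
    rw [Fintype.sum_prod_type]
    have hUe : star (U (σ * τ) j k) = ∑ l, star (U σ j l) * star (U τ l k) := by
      rw [← hUmul, Matrix.mul_apply, star_sum]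
      exact Finset.sum_congr rfl fun l _ => star_mul' _ _
    have hcond : (fun t => f ((φ (σ * τ)) t)) = fun t => f ((φ σ) ((φ τ) t)) := by
      funext t; rw [_root_.map_mul]; rfl
    simp only [hZdef, mul_ite, ite_mul, mul_zero, zero_mul, mul_one, one_mul]
    rw [hcond, hUe]
    have e2 : ∀ (x1 : Fin n → Fin n) (ex : ℂ),
        (if g = fun t => x1 ((φ τ) t) then if x1 = fun t => f ((φ σ) t) then ex else 0 else 0)
          = if x1 = (fun t => f ((φ σ) t)) then
              (if g = fun t => f ((φ σ) ((φ τ) t)) then ex else 0) else 0 := by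
      intro x1 ex
      by_cases h1 : x1 = fun t => f ((φ σ) t)
      · subst h1; simp
      · simp [h1]
    rw [Finset.sum_congr rfl (fun l _ => Finset.sum_congr rfl
      (fun h _ => e2 h (star (U σ j l) * star (U τ l k))))]
    simp only [Finset.sum_ite_eq', Finset.mem_univ, if_true]
    split_ifs with h <;> simp
  have hZstar : ∀ σ, (Z σ)ᴴ = Z σ⁻¹ := by
    intro σ
    ext ⟨j, f⟩ ⟨k, g⟩
    rw [Matrix.conjTranspose_apply]
    have hU2 : star (U σ⁻¹ j k) = U σ k j := by
      have := hUstar σ⁻¹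
      rw [inv_inv] at this
      rw [← this, Matrix.conjTranspose_apply]
    have hc2 : (f = fun t => g ((φ σ) t)) ↔ (g = fun t => f ((φ σ⁻¹) t)) := by
      constructor
      · intro h; subst h; funext t
        simp [← _root_.map_mul]
      · intro h; subst h; funext t
        simp [← _root_.map_mul]
    simp only [hZdef, star_mul', star_star, hU2]
    congr 1
    rw [apply_ite (star : ℂ → ℂ), star_one, star_zero, if_congr hc2 rfl rfl]
  set y : Fin d → (Fin d × (Fin n → Fin n) → ℂ) := fun i p => if p.1 = i then x p.2 else 0 with hydef
  have hterm : ∀ (i : Fin d) (σ : G), star (y i) ⬝ᵥ (Z σ *ᵥ y i)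
      = star (U σ i i) * ∑ f : Fin n → Fin n, star (x f) * x (fun t => f (φ σ t)) := by
    intro i σ
    simp only [dotProduct, mulVec, hydef, hZdef, Fintype.sum_prod_type, Pi.star_apply,
      mul_ite, ite_mul, mul_zero, zero_mul, mul_one, one_mul,
      apply_ite (star : ℂ → ℂ), star_zero, Finset.sum_ite_irrel, Finset.sum_const_zero,
      Finset.sum_ite_eq', Finset.mem_univ, if_true]
    rw [Finset.mul_sum]
    refine Finset.sum_congr rfl fun f _ => ?_
    ring
  have h1 : ∀ i, star (y i) ⬝ᵥ ((∑ σ : G, Z σ) *ᵥ y i) = ∑ σ : G, star (y i) ⬝ᵥ (Z σ *ᵥ y i) := by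
    intro i
    rw [sum_mulVec', dotProduct_sum']
  have htr : ∀ σ : G, ∑ i : Fin d, star (U σ i i) = (U σ⁻¹).trace := by
    intro σ
    rw [← hUstar σ]
    simp [Matrix.trace, Matrix.diag, Matrix.conjTranspose_apply]
  have hT : ∑ i : Fin d, star (y i) ⬝ᵥ ((∑ σ : G, Z σ) *ᵥ y i)
      = ∑ σ : G, (U σ⁻¹).trace * ∑ f : Fin n → Fin n, star (x f) * x (fun t => f (φ σ t)) := by
    simp_rw [h1, hterm]
    rw [Finset.sum_comm]
    refine Finset.sum_congr rfl fun σ _ => ?_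
    rw [← Finset.sum_mul, htr σ]
  rw [← hT]
  exact Finset.sum_nonneg fun i _ => key_quad_nonneg Z hZmul hZstar (y i)


open scoped MatrixOrder Matrix.Norms.L2Operator in
lemma unitarize {G : Type*} [Group G] [Fintype G] {d : ℕ}
    (R : G → Matrix (Fin d) (Fin d) ℂ)
    (hRmul : ∀ σ τ, R σ * R τ = R (σ * τ)) (hR1 : R 1 = 1) :
    ∃ U : G → Matrix (Fin d) (Fin d) ℂ,
      (∀ σ τ, U σ * U τ = U (σ * τ)) ∧ (∀ σ, (U σ)ᴴ = U σ⁻¹) ∧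
      (∀ σ, (U σ).trace = (R σ).trace) := by
  classical
  set S := ∑ τ : G, (R τ)ᴴ * (R τ) with hSdef
  have hSherm : S.IsHermitian := by
    unfold Matrix.IsHermitian
    rw [hSdef, conjTranspose_sum]
    exact Finset.sum_congr rfl fun τ _ => isHermitian_conjTranspose_mul_self (R τ)
  have hSpd : S.PosDef := by
    refine PosDef.of_dotProduct_mulVec_pos hSherm fun x hx => ?_
    rw [hSdef, sum_mulVec', dotProduct_sum']
    apply Finset.sum_pos' (fun τ _ => (posSemidef_conjTranspose_mul_self (R τ)).dotProduct_mulVec_nonneg x)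
    refine ⟨1, Finset.mem_univ 1, ?_⟩
    rw [hR1]
    simpa using dotProduct_star_self_pos_iff.mpr hx
  set C := CFC.sqrt S with hCdef
  have hCC : C * C = S := CFC.sqrt_mul_sqrt_self S hSpd.posSemidef.nonneg
  have hCherm : Cᴴ = C := (CFC.sqrt_nonneg S).posSemidef.1
  have hCdet : IsUnit C.det := by
    have hs : IsUnit S.det := (isUnit_iff_isUnit_det S).mp hSpd.isUnit
    rw [← hCC, det_mul] at hs
    exact isUnit_of_mul_isUnit_left hs
  have hCinv : C * C⁻¹ = 1 := mul_nonsing_inv C hCdet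
  have hCinv' : C⁻¹ * C = 1 := nonsing_inv_mul C hCdet
  have hinv : ∀ σ : G, (R σ)ᴴ * S * R σ = S := by
    intro σ
    rw [hSdef, Finset.mul_sum, Finset.sum_mul]
    have e1 : ∀ τ : G, (R σ)ᴴ * ((R τ)ᴴ * R τ) * R σ = (R (τ * σ))ᴴ * R (τ * σ) := by
      intro τ
      rw [← hRmul, conjTranspose_mul]
      noncomm_ring
    rw [Finset.sum_congr rfl fun τ _ => e1 τ]
    exact Equiv.sum_comp (Equiv.mulRight σ) (fun g => (R g)ᴴ * R g)
  have hRS : ∀ σ : G, (R σ)ᴴ * S = S * R σ⁻¹ := by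
    intro σ
    have h1 : R σ * R σ⁻¹ = 1 := by rw [hRmul, mul_inv_cancel, hR1]
    have h2 : (R σ)ᴴ * S = (R σ)ᴴ * S * (R σ * R σ⁻¹) := by rw [h1, mul_one]
    rw [h2, ← mul_assoc, hinv σ]
  refine ⟨fun σ => C * R σ * C⁻¹, fun σ τ => ?_, fun σ => ?_, fun σ => ?_⟩
  · show C * R σ * C⁻¹ * (C * R τ * C⁻¹) = C * R (σ * τ) * C⁻¹
    rw [← hRmul]
    calc C * R σ * C⁻¹ * (C * R τ * C⁻¹)
        = C * R σ * (C⁻¹ * C) * R τ * C⁻¹ := by noncomm_ring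
      _ = C * (R σ * R τ) * C⁻¹ := by rw [hCinv']; noncomm_ring
  · show (C * R σ * C⁻¹)ᴴ = C * R σ⁻¹ * C⁻¹
    have hCiherm : (C⁻¹)ᴴ = C⁻¹ := by rw [conjTranspose_nonsing_inv, hCherm]
    rw [conjTranspose_mul, conjTranspose_mul, hCiherm, hCherm]
    calc C⁻¹ * ((R σ)ᴴ * C)
        = C⁻¹ * ((R σ)ᴴ * (C * C * C⁻¹)) := by rw [mul_assoc C C C⁻¹, hCinv, mul_one]
      _ = C⁻¹ * ((R σ)ᴴ * S) * C⁻¹ := by rw [hCC]; noncomm_ring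
      _ = C⁻¹ * (S * R σ⁻¹) * C⁻¹ := by rw [hRS]
      _ = C⁻¹ * (C * C) * R σ⁻¹ * C⁻¹ := by rw [hCC]; noncomm_ring
      _ = C * R σ⁻¹ * C⁻¹ := by rw [← mul_assoc C⁻¹ C C, hCinv', one_mul]
  · show (C * R σ * C⁻¹).trace = (R σ).trace
    rw [trace_mul_cycle, hCinv', one_mul]


/-- For a subgroup `H` of `S_n` and an irreducible character `χ` of `H`,
the generalized matrix function `d^H_χ(A) = ∑_{σ ∈ H} χ(σ) ∏_t A_{t, σ(t)}`
of a positive semidefinite matrix `A` is a nonnegative real number. -/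
theorem gmf_nonneg (n : ℕ) (H : Subgroup (Equiv.Perm (Fin n)))
    [Fintype H] (V : FDRep ℂ H) [Simple V]
    (A : Matrix (Fin n) (Fin n) ℂ) (hA : A.PosSemidef) :
    0 ≤ ∑ σ : H, V.character σ * ∏ t, A t ((σ : Equiv.Perm (Fin n)) t) := by
  classical
  open scoped MatrixOrder Matrix.Norms.L2Operator in
  obtain ⟨B, hB⟩ := CStarAlgebra.nonneg_iff_eq_star_mul_self.mp hA.nonneg
  rw [star_eq_conjTranspose] at hB
  set d := Module.finrank ℂ V with hd
  let b : Module.Basis (Fin d) ℂ V := Module.finBasis ℂ V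
  set R : H → Matrix (Fin d) (Fin d) ℂ := fun σ => LinearMap.toMatrix b b (V.ρ σ) with hRdef
  have hRmul : ∀ σ τ : H, R σ * R τ = R (σ * τ) := by
    intro σ τ
    rw [hRdef]
    simp only [_root_.map_mul, LinearMap.toMatrix_mul]
  have hR1 : R 1 = 1 := by
    rw [hRdef]
    simp only [_root_.map_one, LinearMap.toMatrix_one]
  have hchar : ∀ σ : H, V.character σ = (R σ).trace := fun σ =>
    LinearMap.trace_eq_matrix_trace ℂ b _
  obtain ⟨U, hUmul, hUstar, hUtr⟩ := unitarize R hRmul hR1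
  set x : (Fin n → Fin n) → ℂ := fun f => ∏ t, B (f t) t with hxdef
  have hstep1 : ∀ σ : Equiv.Perm (Fin n), ∏ t, A t (σ t)
      = ∑ f : Fin n → Fin n, star (x f) * x (fun t => f (σ⁻¹ t)) := by
    intro σ
    have e0 : ∀ t, A t (σ t) = ∑ k, star (B k t) * B k (σ t) := by
      intro t
      rw [hB]
      simp [Matrix.mul_apply, Matrix.conjTranspose_apply]
    calc ∏ t, A t (σ t) = ∏ t, ∑ k, star (B k t) * B k (σ t) :=
          Finset.prod_congr rfl fun t _ => e0 t
      _ = ∑ f ∈ Fintype.piFinset (fun _ => Finset.univ), ∏ t, star (B (f t) t) * B (f t) (σ t) :=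
          Finset.prod_univ_sum _ _
      _ = ∑ f : Fin n → Fin n, star (x f) * x (fun t => f (σ⁻¹ t)) := by
          rw [Fintype.piFinset_univ]
          refine Finset.sum_congr rfl fun f _ => ?_
          rw [Finset.prod_mul_distrib]
          congr 1
          · rw [hxdef, star_prod]
          · rw [hxdef]
            have := Equiv.prod_comp σ (fun t => B (f (σ⁻¹ t)) t)
            simp only [Equiv.Perm.inv_def, Equiv.symm_apply_apply] at this
            exact this
  have hmain : ∑ σ : H, V.character σ * ∏ t, A t ((σ : Equiv.Perm (Fin n)) t)
      = ∑ σ : H, (U σ⁻¹).trace * ∑ f : Fin n → Fin n,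
          star (x f) * x (fun t => f (H.subtype σ t)) := by
    rw [← Equiv.sum_comp (Equiv.inv H)
      (fun σ : H => V.character σ * ∏ t, A t ((σ : Equiv.Perm (Fin n)) t))]
    refine Finset.sum_congr rfl fun σ _ => ?_
    have hc1 : V.character ((Equiv.inv H) σ) = (U σ⁻¹).trace := by
      rw [hUtr, ← hchar]
      rfl
    have hc2 : ∏ t, A t ((((Equiv.inv H) σ : H) : Equiv.Perm (Fin n)) t)
        = ∑ f : Fin n → Fin n, star (x f) * x (fun t => f (H.subtype σ t)) := by
      have h3 : (((Equiv.inv H) σ : H) : Equiv.Perm (Fin n)) = (σ : Equiv.Perm (Fin n))⁻¹ := by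
        simp [Equiv.inv_apply]
      rw [h3, hstep1 ((σ : Equiv.Perm (Fin n))⁻¹)]
      simp only [inv_inv]
      rfl
    rw [hc1, hc2]
  rw [hmain]
  exact big_nonneg H.subtype U hUmul hUstar x
end

section
/- For every positive semidefinite n×n complex matrix A, the permanent per(A) = Σ_{σ∈S_n} ∏_t A_{t,σ(t)} is a nonnegative real number. -/
open scoped ComplexOrder

open Finset Equiv Matrix

/-- The permanent of a positive semidefinite complex matrix is a nonnegative
real number. -/
theorem permanent_nonneg (n : ℕ) (A : Matrix (Fin n) (Fin n) ℂ)
    (hA : A.PosSemidef) :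
    0 ≤ ∑ σ : Equiv.Perm (Fin n), ∏ t, A t (σ t) := by
  obtain ⟨B, rfl⟩ : ∃ B : Matrix (Fin n) (Fin n) ℂ, A = Bᴴ * B := by
    open scoped MatrixOrder in
    obtain ⟨B, hB⟩ := CStarAlgebra.nonneg_iff_eq_star_mul_self.mp hA.nonneg
    exact ⟨B, hB⟩
  set g : (Fin n → Fin n) → ℂ := fun f => ∏ t, B (f t) t with hg
  set S : ℂ := ∑ f : Fin n → Fin n, ∑ σ : Equiv.Perm (Fin n), star (g f) * g (f ∘ σ) with hS
  have step1 : ∑ σ : Equiv.Perm (Fin n), ∏ t, (Bᴴ * B) t (σ t) = S := by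
    have expand : ∀ σ : Equiv.Perm (Fin n),
        ∏ t, (Bᴴ * B) t (σ t) = ∑ f : Fin n → Fin n, star (g f) * g (f ∘ ⇑(σ⁻¹)) := by
      intro σ
      have : ∀ t, (Bᴴ * B) t (σ t) = ∑ k, star (B k t) * B k (σ t) := by
        intro t
        simp [Matrix.mul_apply, Matrix.conjTranspose_apply]
      rw [Finset.prod_congr rfl fun t _ => this t]
      rw [Finset.prod_univ_sum]
      rw [Fintype.piFinset_univ]
      refine Finset.sum_congr rfl fun f _ => ?_
      rw [Finset.prod_mul_distrib]
      congr 1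
      · rw [hg]; simp [star_prod]
      · rw [hg]
        simp only [Function.comp_apply]
        rw [← Equiv.prod_comp σ⁻¹ (fun x => B (f x) (σ x))]
        simp
    calc ∑ σ : Equiv.Perm (Fin n), ∏ t, (Bᴴ * B) t (σ t)
        = ∑ σ : Equiv.Perm (Fin n), ∑ f : Fin n → Fin n, star (g f) * g (f ∘ ⇑(σ⁻¹)) :=
          Finset.sum_congr rfl fun σ _ => expand σ
      _ = ∑ σ : Equiv.Perm (Fin n), ∑ f : Fin n → Fin n, star (g f) * g (f ∘ σ) := by
          rw [← Equiv.sum_comp (Equiv.inv (Equiv.Perm (Fin n)))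
            (fun σ => ∑ f : Fin n → Fin n, star (g f) * g (f ∘ σ))]
          simp
      _ = S := Finset.sum_comm
  have step2 : ∑ f : Fin n → Fin n,
      star (∑ σ : Equiv.Perm (Fin n), g (f ∘ σ)) * (∑ σ : Equiv.Perm (Fin n), g (f ∘ σ))
      = (n.factorial : ℂ) * S := by
    have : ∀ f : Fin n → Fin n,
        star (∑ σ : Equiv.Perm (Fin n), g (f ∘ σ)) * (∑ σ : Equiv.Perm (Fin n), g (f ∘ σ))
        = ∑ σ : Equiv.Perm (Fin n), ∑ τ : Equiv.Perm (Fin n), star (g (f ∘ σ)) * g (f ∘ τ) := by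
      intro f
      rw [star_sum, Finset.sum_mul]
      exact Finset.sum_congr rfl fun σ _ => by rw [Finset.mul_sum]
    rw [Finset.sum_congr rfl fun f _ => this f]
    rw [Finset.sum_comm]
    have inner : ∀ σ : Equiv.Perm (Fin n),
        ∑ f : Fin n → Fin n, ∑ τ : Equiv.Perm (Fin n), star (g (f ∘ σ)) * g (f ∘ τ) = S := by
      intro σ
      -- reindex τ = σ * ρ
      have reτ : ∀ f : Fin n → Fin n,
          ∑ τ : Equiv.Perm (Fin n), star (g (f ∘ σ)) * g (f ∘ τ)
          = ∑ ρ : Equiv.Perm (Fin n), star (g (f ∘ σ)) * g ((f ∘ σ) ∘ ρ) := by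
        intro f
        rw [← Equiv.sum_comp (Equiv.mulLeft σ)
          (fun τ => star (g (f ∘ σ)) * g (f ∘ τ))]
        refine Finset.sum_congr rfl fun ρ _ => ?_
        congr 1
      rw [Finset.sum_congr rfl fun f _ => reτ f]
      -- reindex f ↦ f ∘ σ
      have e : (Fin n → Fin n) ≃ (Fin n → Fin n) := Equiv.arrowCongr σ.symm (Equiv.refl _)
      rw [hS, ← Equiv.sum_comp (Equiv.arrowCongr σ.symm (Equiv.refl (Fin n)))
        (fun h => ∑ ρ : Equiv.Perm (Fin n), star (g h) * g (h ∘ ρ))]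
      refine Finset.sum_congr rfl fun f _ => ?_
      have hfe : (Equiv.arrowCongr σ.symm (Equiv.refl (Fin n))) f = f ∘ σ := by
        ext t; simp
      rw [hfe]
    rw [Finset.sum_congr rfl fun σ _ => inner σ]
    rw [Finset.sum_const, Finset.card_univ, Fintype.card_perm, Fintype.card_fin, nsmul_eq_mul]
  rw [step1]
  have hnonneg : 0 ≤ (n.factorial : ℂ) * S := by
    rw [← step2]
    exact Finset.sum_nonneg fun f _ => star_mul_self_nonneg _
  have hinv : (0 : ℂ) ≤ (((n.factorial : ℝ)⁻¹ : ℝ) : ℂ) := by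
    rw [Complex.zero_le_real]
    positivity
  have : S = (((n.factorial : ℝ)⁻¹ : ℝ) : ℂ) * ((n.factorial : ℂ) * S) := by
    rw [← mul_assoc]
    have : (((n.factorial : ℝ)⁻¹ : ℝ) : ℂ) * (n.factorial : ℂ) = 1 := by
      have h0 : (n.factorial : ℝ) ≠ 0 := by positivity
      push_cast
      field_simp
    rw [this, one_mul]
  rw [this]
  exact mul_nonneg hinv hnonneg
end

section
/- Marcus's inequality: for every positive semidefinite n×n complex matrix A, the permanent satisfies per(A) ≥ ∏_{i=1}^n A_{ii}. -/
set_option maxHeartbeats 1000000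

open scoped ComplexOrder
open Finset Equiv

namespace MarcusAux

local notation "conj'" => starRingEnd ℂ

/-- inner product on `Fin m → ℂ` -/
noncomputable def ip {m : ℕ} (x y : Fin m → ℂ) : ℂ := ∑ k, conj' (x k) * y k

/-- permanent pairing of two tuples of vectors -/
noncomputable def pp {m N : ℕ} (x y : Fin N → (Fin m → ℂ)) : ℂ :=
  ∑ σ : Equiv.Perm (Fin N), ∏ t, ip (x t) (y (σ t))

/-- coordinate product -/
noncomputable def cf {m N : ℕ} (x : Fin N → (Fin m → ℂ)) (f : Fin N → Fin m) : ℂ :=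
  ∏ t, x t (f t)

lemma ip_self_nonneg {m : ℕ} (x : Fin m → ℂ) : 0 ≤ ip x x := by
  refine Finset.sum_nonneg fun k _ => ?_
  simpa using star_mul_self_nonneg (x k)

lemma conj_ip {m : ℕ} (x y : Fin m → ℂ) : conj' (ip x y) = ip y x := by
  simp [ip, map_sum, mul_comm]

/-- precomposition equiv -/
def pre {N m : ℕ} (τ : Equiv.Perm (Fin N)) : (Fin N → Fin m) ≃ (Fin N → Fin m) :=
  Equiv.arrowCongr τ.symm (Equiv.refl _)

@[simp] lemma pre_apply {N m : ℕ} (τ : Equiv.Perm (Fin N)) (f : Fin N → Fin m) :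
    pre τ f = f ∘ τ := rfl

lemma keyL {m N : ℕ} (d : (Fin N → Fin m) → ℂ) :
    0 ≤ ∑ π : Equiv.Perm (Fin N), ∑ f : Fin N → Fin m, conj' (d f) * d (f ∘ π) := by
  set S := ∑ π : Equiv.Perm (Fin N), ∑ f : Fin N → Fin m, conj' (d f) * d (f ∘ π) with hS
  have key : (N.factorial : ℂ) * S
      = ∑ f : Fin N → Fin m, conj' (∑ τ : Equiv.Perm (Fin N), d (f ∘ τ))
          * (∑ τ : Equiv.Perm (Fin N), d (f ∘ τ)) := by
    have : ∀ f : Fin N → Fin m,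
        conj' (∑ τ : Equiv.Perm (Fin N), d (f ∘ τ)) * (∑ τ : Equiv.Perm (Fin N), d (f ∘ τ))
        = ∑ τ : Equiv.Perm (Fin N), ∑ ρ : Equiv.Perm (Fin N), conj' (d (f ∘ τ)) * d (f ∘ ρ) := by
      intro f
      rw [map_sum, Finset.sum_mul_sum]
    rw [Finset.sum_congr rfl fun f _ => this f]
    rw [Finset.sum_comm]
    have step : ∀ τ : Equiv.Perm (Fin N),
        (∑ f : Fin N → Fin m, ∑ ρ : Equiv.Perm (Fin N), conj' (d (f ∘ τ)) * d (f ∘ ρ)) = S := by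
      intro τ
      rw [hS, Finset.sum_comm]
      calc (∑ ρ : Equiv.Perm (Fin N), ∑ f : Fin N → Fin m, conj' (d (f ∘ τ)) * d (f ∘ ρ))
          = ∑ ρ : Equiv.Perm (Fin N), ∑ f : Fin N → Fin m,
              conj' (d f) * d (f ∘ ⇑(τ⁻¹ * ρ)) := by
            refine Finset.sum_congr rfl fun ρ _ => ?_
            rw [← Equiv.sum_comp (pre τ⁻¹) (fun f => conj' (d (f ∘ τ)) * d (f ∘ ρ))]
            refine Finset.sum_congr rfl fun f _ => ?_
            simp only [pre_apply]
            have h1 : (f ∘ ⇑τ⁻¹) ∘ ⇑τ = f := by funext t; simp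
            have h2 : (f ∘ ⇑τ⁻¹) ∘ ⇑ρ = f ∘ ⇑(τ⁻¹ * ρ) := by
              funext t; simp [Equiv.Perm.mul_apply]
            rw [h1, h2]
        _ = ∑ π : Equiv.Perm (Fin N), ∑ f : Fin N → Fin m, conj' (d f) * d (f ∘ π) := by
            rw [← Equiv.sum_comp (Equiv.mulLeft τ⁻¹)
              (fun π => ∑ f : Fin N → Fin m, conj' (d f) * d (f ∘ π))]
            rfl
    rw [Finset.sum_congr rfl fun τ _ => step τ, Finset.sum_const, Finset.card_univ,
      Fintype.card_perm, nsmul_eq_mul, Fintype.card_fin]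
  have pos : 0 ≤ (N.factorial : ℂ) * S := by
    rw [key]
    refine Finset.sum_nonneg fun f _ => ?_
    simpa using star_mul_self_nonneg (∑ τ : Equiv.Perm (Fin N), d (f ∘ τ))
  have hinv : (0:ℂ) ≤ (N.factorial : ℂ)⁻¹ := by
    rw [show ((N.factorial : ℂ)) = ((N.factorial : ℝ) : ℂ) by push_cast; ring,
      ← Complex.ofReal_inv, Complex.zero_le_real]
    positivity
  have hne : (N.factorial : ℂ) ≠ 0 := by
    exact_mod_cast Nat.cast_ne_zero.mpr (Nat.factorial_ne_zero N)
  have : S = (N.factorial : ℂ)⁻¹ * ((N.factorial : ℂ) * S) := by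
    field_simp
  rw [this]
  exact mul_nonneg hinv pos

lemma pp_eq {m N : ℕ} (x y : Fin N → (Fin m → ℂ)) :
    pp x y = ∑ σ : Equiv.Perm (Fin N), ∑ f : Fin N → Fin m, conj' (cf x f) * cf y (f ∘ σ) := by
  unfold pp
  rw [← Equiv.sum_comp (Equiv.inv (Equiv.Perm (Fin N)))
    (fun σ => ∑ f : Fin N → Fin m, conj' (cf x f) * cf y (f ∘ σ))]
  refine Finset.sum_congr rfl fun σ _ => ?_
  have expand : (∏ t, ip (x t) (y (σ t)))
      = ∑ f : Fin N → Fin m, ∏ t, conj' (x t (f t)) * y (σ t) (f t) := by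
    unfold ip
    rw [Finset.prod_univ_sum]
    rw [← Fintype.piFinset_univ]
  rw [expand]
  refine Finset.sum_congr rfl fun f _ => ?_
  rw [Finset.prod_mul_distrib]
  congr 1
  · unfold cf; rw [map_prod]
  · unfold cf
    have : (∏ t, y (σ t) (f t)) = ∏ s, y s ((f ∘ ⇑((Equiv.inv (Equiv.Perm (Fin N))) σ)) s) := by
      rw [← Equiv.prod_comp σ (fun s => y s ((f ∘ ⇑((Equiv.inv (Equiv.Perm (Fin N))) σ)) s))]
      refine Finset.prod_congr rfl fun t _ => ?_
      simp
    rw [this]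

lemma sum_swap4 {α β γ δ : Type*} [Fintype α] [Fintype β] [Fintype γ] [Fintype δ]
    (g : α → β → γ → δ → ℂ) :
    ∑ a, ∑ b, ∑ c, ∑ d, g a b c d = ∑ c, ∑ d, ∑ a, ∑ b, g a b c d := by
  calc (∑ a, ∑ b, ∑ c, ∑ d, g a b c d)
      = ∑ a, ∑ c, ∑ b, ∑ d, g a b c d :=
        Finset.sum_congr rfl fun a _ => Finset.sum_comm
    _ = ∑ c, ∑ a, ∑ b, ∑ d, g a b c d := Finset.sum_comm
    _ = ∑ c, ∑ a, ∑ d, ∑ b, g a b c d :=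
        Finset.sum_congr rfl fun c _ => Finset.sum_congr rfl fun a _ => Finset.sum_comm
    _ = ∑ c, ∑ d, ∑ a, ∑ b, g a b c d :=
        Finset.sum_congr rfl fun c _ => Finset.sum_comm

lemma keyA {m N : ℕ} {ι : Type*} [Fintype ι] (z : ι → ℂ) (u : ι → Fin N → (Fin m → ℂ)) :
    0 ≤ ∑ a, ∑ b, conj' (z a) * z b * pp (u a) (u b) := by
  have main : (∑ a, ∑ b, conj' (z a) * z b * pp (u a) (u b))
      = ∑ π : Equiv.Perm (Fin N), ∑ f : Fin N → Fin m,
          conj' (∑ a, z a * cf (u a) f) * (∑ b, z b * cf (u b) (f ∘ π)) := by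
    calc (∑ a, ∑ b, conj' (z a) * z b * pp (u a) (u b))
        = ∑ a, ∑ b, ∑ π : Equiv.Perm (Fin N), ∑ f : Fin N → Fin m,
            conj' (z a) * z b * (conj' (cf (u a) f) * cf (u b) (f ∘ π)) := by
          simp only [pp_eq, Finset.mul_sum]
      _ = ∑ π : Equiv.Perm (Fin N), ∑ f : Fin N → Fin m, ∑ a, ∑ b,
            conj' (z a) * z b * (conj' (cf (u a) f) * cf (u b) (f ∘ π)) := sum_swap4 _
      _ = ∑ π : Equiv.Perm (Fin N), ∑ f : Fin N → Fin m,
          conj' (∑ a, z a * cf (u a) f) * (∑ b, z b * cf (u b) (f ∘ π)) := by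
          refine Finset.sum_congr rfl fun π _ => Finset.sum_congr rfl fun f _ => ?_
          rw [map_sum, Finset.sum_mul_sum]
          refine Finset.sum_congr rfl fun a _ => Finset.sum_congr rfl fun b _ => ?_
          rw [map_mul]
          ring
  rw [main]
  exact keyL (fun f => ∑ a, z a * cf (u a) f)

lemma decomposeFin_fst {M : ℕ} (τ : Equiv.Perm (Fin (M+1))) :
    (Equiv.Perm.decomposeFin τ).1 = τ 0 := by
  have h : Equiv.Perm.decomposeFin.symm
      ((Equiv.Perm.decomposeFin τ).1, (Equiv.Perm.decomposeFin τ).2) = τ := by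
    rw [Prod.mk.eta]
    exact Equiv.symm_apply_apply _ _
  have h3 := congrArg (fun σ : Equiv.Perm (Fin (M+1)) => σ 0) h
  rwa [Equiv.Perm.decomposeFin_symm_apply_zero] at h3

/-- `Theta M (p, e)` sends `0 ↦ p` and `i.succ ↦ p.succAbove (e i)`. -/
def Theta (M : ℕ) : Fin (M+1) × Equiv.Perm (Fin M) ≃ Equiv.Perm (Fin (M+1)) where
  toFun pe := (Fin.cycleRange pe.1)⁻¹ * Equiv.Perm.decomposeFin.symm (0, pe.2)
  invFun sg := (sg 0, (Equiv.Perm.decomposeFin ((Fin.cycleRange (sg 0)) * sg)).2)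
  left_inv := by
    rintro ⟨p, e⟩
    have h0 : ((Fin.cycleRange p)⁻¹ * Equiv.Perm.decomposeFin.symm (0, e)) 0 = p := by
      rw [Equiv.Perm.mul_apply, Equiv.Perm.decomposeFin_symm_apply_zero]
      exact Fin.cycleRange_symm_zero p
    simp only [h0]
    rw [mul_inv_cancel_left]
    rw [Equiv.apply_symm_apply]
  right_inv := by
    intro sg
    have hfix : (Fin.cycleRange (sg 0) * sg) 0 = 0 := by
      rw [Equiv.Perm.mul_apply, Fin.cycleRange_self]
    have h1 : (Equiv.Perm.decomposeFin (Fin.cycleRange (sg 0) * sg)).1 = 0 := by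
      rw [decomposeFin_fst, hfix]
    have h2' : Equiv.Perm.decomposeFin (Fin.cycleRange (sg 0) * sg)
        = (0, (Equiv.Perm.decomposeFin (Fin.cycleRange (sg 0) * sg)).2) :=
      Prod.ext h1 rfl
    have h2 : Equiv.Perm.decomposeFin.symm
        (0, (Equiv.Perm.decomposeFin (Fin.cycleRange (sg 0) * sg)).2)
        = Fin.cycleRange (sg 0) * sg := by
      rw [← h2']
      exact Equiv.symm_apply_apply _ _
    simp only [h2]
    rw [inv_mul_cancel_left]

@[simp] lemma Theta_apply_zero {M : ℕ} (p : Fin (M+1)) (e : Equiv.Perm (Fin M)) :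
    Theta M (p, e) 0 = p := by
  show ((Fin.cycleRange p)⁻¹ * Equiv.Perm.decomposeFin.symm (0, e)) 0 = p
  rw [Equiv.Perm.mul_apply, Equiv.Perm.decomposeFin_symm_apply_zero]
  exact Fin.cycleRange_symm_zero p

@[simp] lemma Theta_apply_succ {M : ℕ} (p : Fin (M+1)) (e : Equiv.Perm (Fin M)) (i : Fin M) :
    Theta M (p, e) i.succ = p.succAbove (e i) := by
  show ((Fin.cycleRange p)⁻¹ * Equiv.Perm.decomposeFin.symm (0, e)) i.succ = p.succAbove (e i)
  rw [Equiv.Perm.mul_apply, Equiv.Perm.decomposeFin_symm_apply_succ]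
  rw [Equiv.swap_self, Equiv.refl_apply]
  exact Fin.cycleRange_symm_succ p (e i)

lemma inner_expand {m M : ℕ} (w : Fin (M+1) → (Fin m → ℂ)) (x0 : Fin m → ℂ) (q : Fin (M+1)) :
    ∑ e : Equiv.Perm (Fin (M+1)), ∏ i, ip (w i) (if e i = q then x0 else w (e i))
      = ∑ p : Fin (M+1), ip (w p) x0 * pp (w ∘ p.succAbove) (w ∘ q.succAbove) := by
  set uq : Fin (M+1) → (Fin m → ℂ) := fun j => if j = q then x0 else w j with huq
  -- step 1 : sum over e of ∏_j ip (w (e j)) (uq j)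
  have step1 : (∑ e : Equiv.Perm (Fin (M+1)), ∏ i, ip (w i) (if e i = q then x0 else w (e i)))
      = ∑ e : Equiv.Perm (Fin (M+1)), ∏ j, ip (w (e j)) (uq j) := by
    rw [← Equiv.sum_comp (Equiv.inv (Equiv.Perm (Fin (M+1))))
      (fun e => ∏ j, ip (w (e j)) (uq j))]
    refine Finset.sum_congr rfl fun e _ => ?_
    rw [← Equiv.prod_comp e (fun j => ip (w ((Equiv.inv (Equiv.Perm (Fin (M+1))) e) j)) (uq j))]
    refine Finset.prod_congr rfl fun i _ => ?_
    simp [huq]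
  rw [step1]
  -- step 2 : reparametrize e by Theta and translation
  set c : Equiv.Perm (Fin (M+1)) := (Theta M (q, 1))⁻¹ with hc
  have hcq : c q = 0 := by
    rw [hc, Equiv.Perm.inv_eq_iff_eq]
    exact (Theta_apply_zero q 1).symm
  have hcs : ∀ i : Fin M, c (q.succAbove i) = i.succ := by
    intro i
    rw [hc, Equiv.Perm.inv_eq_iff_eq]
    have := Theta_apply_succ q 1 i
    simpa using this.symm
  set E : (Fin (M+1) × Equiv.Perm (Fin M)) ≃ Equiv.Perm (Fin (M+1)) :=
    (Theta M).trans (Equiv.mulRight c) with hE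
  rw [← Equiv.sum_comp E (fun e => ∏ j, ip (w (e j)) (uq j))]
  rw [Fintype.sum_prod_type]
  refine Finset.sum_congr rfl fun p _ => ?_
  have eval : ∀ e' : Equiv.Perm (Fin M), (∏ j, ip (w ((E (p, e')) j)) (uq j))
      = ip (w p) x0 * ∏ i : Fin M, ip (w (p.succAbove (e' i))) (w (q.succAbove i)) := by
    intro e'
    rw [Fin.prod_univ_succAbove (fun j => ip (w ((E (p, e')) j)) (uq j)) q]
    congr 1
    · have : (E (p, e')) q = p := by
        simp only [hE, Equiv.trans_apply, Equiv.coe_mulRight, Equiv.Perm.mul_apply, hcq]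
        exact Theta_apply_zero p e'
      rw [this]
      simp [huq]
    · refine Finset.prod_congr rfl fun i _ => ?_
      have : (E (p, e')) (q.succAbove i) = p.succAbove (e' i) := by
        simp only [hE, Equiv.trans_apply, Equiv.coe_mulRight, Equiv.Perm.mul_apply, hcs i]
        exact Theta_apply_succ p e' i
      rw [this]
      congr 1
      rw [huq]
      simp [Fin.succAbove_ne q i]
  rw [Finset.sum_congr rfl fun e' _ => eval e', ← Finset.mul_sum]
  congr 1
  -- now the pp identification
  unfold pp
  rw [← Equiv.sum_comp (Equiv.inv (Equiv.Perm (Fin M)))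
    (fun σ => ∏ t, ip ((w ∘ p.succAbove) t) ((w ∘ q.succAbove) (σ t)))]
  refine Finset.sum_congr rfl fun e' _ => ?_
  rw [← Equiv.prod_comp e' (fun t => ip ((w ∘ p.succAbove) t)
    ((w ∘ q.succAbove) ((Equiv.inv (Equiv.Perm (Fin M)) e') t)))]
  refine Finset.prod_congr rfl fun i _ => ?_
  simp

lemma swap_zero_succ {M : ℕ} (q : Fin (M+1)) (x : Fin (M+1)) :
    Equiv.swap (0 : Fin (M+2)) q.succ x.succ = if x = q then 0 else x.succ := by
  rcases eq_or_ne x q with h | h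
  · subst h; simp [Equiv.swap_apply_right]
  · rw [if_neg h]
    exact Equiv.swap_apply_of_ne_of_ne (Fin.succ_ne_zero x) (by simpa using h)

lemma pp_decomp {m M : ℕ} (v : Fin (M+2) → (Fin m → ℂ)) :
    pp v v = ip (v 0) (v 0) * pp (fun i => v i.succ) (fun i => v i.succ)
      + ∑ r : Fin (M+1), ∑ q : Fin (M+1),
          conj' (ip (v 0) (v r.succ)) * ip (v 0) (v q.succ)
            * pp (fun t => v (Fin.succ (r.succAbove t))) (fun t => v (Fin.succ (q.succAbove t))) := by
  set w : Fin (M+1) → (Fin m → ℂ) := fun i => v i.succ with hw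
  have hppvv : pp v v = ∑ p : Fin (M+2), ∑ e : Equiv.Perm (Fin (M+1)),
      ip (v 0) (v p) * ∏ i, ip (w i) (v (Equiv.swap 0 p ((e i).succ))) := by
    unfold pp
    rw [← Equiv.sum_comp (Equiv.Perm.decomposeFin.symm)
      (fun σ => ∏ t, ip (v t) (v (σ t))), Fintype.sum_prod_type]
    refine Finset.sum_congr rfl fun p _ => Finset.sum_congr rfl fun e _ => ?_
    rw [Fin.prod_univ_succ]
    congr 1
    · rw [Equiv.Perm.decomposeFin_symm_apply_zero]
    · refine Finset.prod_congr rfl fun i _ => ?_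
      rw [Equiv.Perm.decomposeFin_symm_apply_succ]
  rw [hppvv, Fin.sum_univ_succ]
  congr 1
  · -- p = 0 term
    have : ∀ e : Equiv.Perm (Fin (M+1)),
        (ip (v 0) (v 0) * ∏ i, ip (w i) (v (Equiv.swap 0 0 ((e i).succ))))
        = ip (v 0) (v 0) * ∏ i, ip (w i) (w (e i)) := by
      intro e
      simp only [Equiv.swap_self, Equiv.refl_apply]
      rfl
    rw [Finset.sum_congr rfl fun e _ => this e, ← Finset.mul_sum]
    rfl
  · -- p = q.succ terms
    have hterm : ∀ q : Fin (M+1),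
        (∑ e : Equiv.Perm (Fin (M+1)),
          ip (v 0) (v q.succ) * ∏ i, ip (w i) (v (Equiv.swap 0 q.succ ((e i).succ))))
        = ip (v 0) (v q.succ) * ∑ p : Fin (M+1),
            ip (w p) (v 0) * pp (w ∘ p.succAbove) (w ∘ q.succAbove) := by
      intro q
      rw [← Finset.mul_sum]
      congr 1
      rw [← inner_expand w (v 0) q]
      refine Finset.sum_congr rfl fun e _ => ?_
      refine Finset.prod_congr rfl fun i _ => ?_
      rw [swap_zero_succ]
      rcases eq_or_ne (e i) q with h | h
      · simp only [if_pos h]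
      · simp only [if_neg h]
        rfl
    rw [Finset.sum_congr rfl fun q _ => hterm q]
    rw [Finset.sum_comm]
    refine Finset.sum_congr rfl fun r _ => ?_
    rw [Finset.mul_sum]
    refine Finset.sum_congr rfl fun q _ => ?_
    rw [conj_ip]
    have h1 : (w ∘ r.succAbove) = (fun t => v (Fin.succ (r.succAbove t))) := rfl
    have h2 : (w ∘ q.succAbove) = (fun t => v (Fin.succ (q.succAbove t))) := rfl
    rw [h1, h2]
    ring

lemma prod_le_pp {m : ℕ} : ∀ (N : ℕ) (v : Fin N → (Fin m → ℂ)),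
    (∏ i, ip (v i) (v i)) ≤ pp v v := by
  intro N
  induction N with
  | zero =>
    intro v
    simp [pp]
  | succ N ih =>
    cases N with
    | zero =>
      intro v
      have : pp v v = ∏ i, ip (v i) (v i) := by
        unfold pp
        rw [Fintype.sum_subsingleton _ (1 : Equiv.Perm (Fin 1))]
        simp
      rw [this]
    | succ M =>
      intro v
      rw [pp_decomp v]
      have h1 : (∏ i : Fin (M+1), ip (v (Fin.succ i)) (v (Fin.succ i)))
          ≤ pp (fun i => v i.succ) (fun i => v i.succ) := ih (fun i => v i.succ)
      have h2 : 0 ≤ ip (v 0) (v 0) := ip_self_nonneg _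
      have h3 := keyA (m := m) (N := M) (ι := Fin (M+1))
        (fun q => ip (v 0) (v q.succ)) (fun q => fun t => v (Fin.succ (q.succAbove t)))
      calc (∏ i : Fin (M+2), ip (v i) (v i))
          = ip (v 0) (v 0) * ∏ i : Fin (M+1), ip (v (Fin.succ i)) (v (Fin.succ i)) :=
            Fin.prod_univ_succ _
        _ ≤ ip (v 0) (v 0) * pp (fun i => v i.succ) (fun i => v i.succ) :=
            mul_le_mul_of_nonneg_left h1 h2
        _ ≤ _ := le_add_of_nonneg_right h3

end MarcusAux

/-- Marcus's inequality: for a positive semidefinite matrix the permanent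
dominates the product of the diagonal entries. -/
theorem marcus_inequality (n : ℕ) (A : Matrix (Fin n) (Fin n) ℂ)
    (hA : A.PosSemidef) :
    ∏ i, A i i ≤ ∑ σ : Equiv.Perm (Fin n), ∏ t, A t (σ t) := by
  obtain ⟨B, rfl⟩ : ∃ B : Matrix (Fin n) (Fin n) ℂ, A = Matrix.conjTranspose B * B := by
    open scoped MatrixOrder Matrix.Norms.L2Operator in
    exact CStarAlgebra.nonneg_iff_eq_star_mul_self.mp (Matrix.nonneg_iff_posSemidef.mpr hA)
  have hentry : ∀ i j, (Matrix.conjTranspose B * B) i j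
      = MarcusAux.ip (fun k => B k i) (fun k => B k j) := by
    intro i j
    rw [Matrix.mul_apply]
    simp [MarcusAux.ip, Matrix.conjTranspose_apply]
  simp only [hentry]
  exact MarcusAux.prod_le_pp n (fun i => fun k => B k i)
end

section
/- Let f : S_n → C be such that d_f(A) := Σ_{σ∈S_n} f(σ) ∏_t A_{t,σ(t)} is a nonnegative real for every positive semidefinite n×n complex matrix A. Then for all positive semidefinite m×m complex matrices X_1,...,X_{n-1} and every w ∈ C^m, the quantity Σ_{σ∈S_n} f(σ) tr(σ^{-1}·(X_1 ⊗ ... ⊗ X_{n-1} ⊗ |w⟩⟨w|)) is a nonnegative real, where σ^{-1} acts on (C^m)^{⊗n} by permuting tensor factors. -/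
open scoped ComplexOrder
open Matrix

/-- The Kronecker product `X 0 ⊗ ⋯ ⊗ X n` acting on `(ℂ^m)^{⊗ (n+1)}`,
realized as a matrix indexed by functions. -/
noncomputable def tensorMat {n m : ℕ} (X : Fin n → Matrix (Fin m) (Fin m) ℂ) :
    Matrix (Fin n → Fin m) (Fin n → Fin m) ℂ :=
  Matrix.of fun k l => ∏ i, X i (k i) (l i)

/-- The operator on `(ℂ^m)^{⊗ n}` permuting the tensor factors by `σ`:
on pure tensors, the `i`-th factor of `σ • (w 0 ⊗ ⋯ ⊗ w (n-1))` is `w (σ⁻¹ i)`. -/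
noncomputable def permMat {m : ℕ} (n : ℕ) (σ : Equiv.Perm (Fin n)) :
    Matrix (Fin n → Fin m) (Fin n → Fin m) ℂ :=
  Matrix.of fun k l => if (k = fun i => l (σ⁻¹ i)) then 1 else 0

lemma sum_prod_pi_eq {k m : ℕ} (g : Fin k → Fin m → ℂ) :
    (∑ l : Fin k → Fin m, ∏ i, g i (l i)) = ∏ i, ∑ a, g i a := by
  calc (∑ l : Fin k → Fin m, ∏ i, g i (l i))
      = ∑ l ∈ Fintype.piFinset (fun _ => (Finset.univ : Finset (Fin m))),
          ∏ i, g i (l i) := by rw [Fintype.piFinset_univ]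
    _ = ∏ i, ∑ a, g i a := (Finset.prod_univ_sum _ _).symm

set_option maxHeartbeats 1000000 in
/-- If `d_f(A) = ∑_σ f(σ) ∏_t A_{t,σ(t)}` is a nonnegative real for every
positive semidefinite `(n+1) × (n+1)` matrix `A`, then for all positive
semidefinite `m × m` matrices `X 0, …, X (n-1)` and every `w ∈ ℂ^m`,
`∑_σ f(σ) tr(σ⁻¹ · (X 0 ⊗ ⋯ ⊗ X (n-1) ⊗ |w⟩⟨w|))` is a nonnegative real. -/
theorem matrix_gmf_nonneg (n m : ℕ) (f : Equiv.Perm (Fin (n + 1)) → ℂ)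
    (hf : ∀ A : Matrix (Fin (n + 1)) (Fin (n + 1)) ℂ, A.PosSemidef →
      0 ≤ ∑ σ : Equiv.Perm (Fin (n + 1)), f σ * ∏ t, A t (σ t))
    (X : Fin n → Matrix (Fin m) (Fin m) ℂ) (hX : ∀ i, (X i).PosSemidef)
    (w : Fin m → ℂ) :
    0 ≤ ∑ σ : Equiv.Perm (Fin (n + 1)), f σ *
        (permMat (n + 1) σ⁻¹ *
          tensorMat (Fin.snoc X (Matrix.vecMulVec w (star w)))).trace := by
  classical
  set Y : Fin (n + 1) → Matrix (Fin m) (Fin m) ℂ :=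
    Fin.snoc X (Matrix.vecMulVec w (star w)) with hY
  have hYpsd : ∀ i, (Y i).PosSemidef := by
    intro i
    refine Fin.lastCases ?_ (fun j => ?_) i
    · rw [hY, Fin.snoc_last, Matrix.vecMulVec_eq Unit, ← Matrix.conjTranspose_replicateCol]
      exact Matrix.posSemidef_self_mul_conjTranspose _
    · rw [hY, Fin.snoc_castSucc]; exact hX j
  choose B hB using fun i => (show ∃ B : Matrix (Fin m) (Fin m) ℂ, Y i = Bᴴ * B by
    open scoped MatrixOrder Norms.L2Operator in
    exact CStarAlgebra.nonneg_iff_eq_star_mul_self.mp (hYpsd i).nonneg)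
  -- Gram matrices
  set M : (Fin (n + 1) → Fin m) → Matrix (Fin (n + 1)) (Fin m) ℂ :=
    fun c => Matrix.of fun t a => B t (c t) a with hM
  set A : (Fin (n + 1) → Fin m) → Matrix (Fin (n + 1)) (Fin (n + 1)) ℂ :=
    fun c => M c * (M c)ᴴ with hA
  have hApsd : ∀ c, (A c).PosSemidef :=
    fun c => Matrix.posSemidef_self_mul_conjTranspose _
  have hAapp : ∀ c t s, A c t s = ∑ a, B t (c t) a * star (B s (c s) a) := by
    intro c t s
    simp [hA, hM, Matrix.mul_apply, Matrix.conjTranspose_apply]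
  -- trace formula
  have htr : ∀ σ : Equiv.Perm (Fin (n + 1)),
      (permMat (n + 1) σ⁻¹ * tensorMat Y).trace
        = ∑ l : Fin (n + 1) → Fin m, ∏ i, Y i (l i) (l (σ i)) := by
    intro σ
    rw [Matrix.trace]
    simp only [Matrix.diag_apply, Matrix.mul_apply, permMat, tensorMat, Matrix.of_apply,
      inv_inv, ite_mul, one_mul, zero_mul]
    rw [Finset.sum_comm]
    refine Finset.sum_congr rfl fun l _ => ?_
    rw [Finset.sum_ite_eq' Finset.univ]
    simp
  -- expand Y via B
  have key1 : ∀ (σ : Equiv.Perm (Fin (n + 1))) (l : Fin (n + 1) → Fin m),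
      (∏ i, Y i (l i) (l (σ i)))
        = ∑ c : Fin (n + 1) → Fin m,
            ∏ i, (star (B i (c i) (l i)) * B i (c i) (l (σ i))) := by
    intro σ l
    have : ∀ i, Y i (l i) (l (σ i))
        = ∑ a, star (B i a (l i)) * B i a (l (σ i)) := by
      intro i
      rw [hB i]
      simp [Matrix.mul_apply, Matrix.conjTranspose_apply]
    simp_rw [this]
    exact (sum_prod_pi_eq (fun i a => star (B i a (l i)) * B i a (l (σ i)))).symm
  -- factorize the sum over l into a generalized matrix function of A c
  have key2 : ∀ (σ : Equiv.Perm (Fin (n + 1))) (c : Fin (n + 1) → Fin m),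
      (∑ l : Fin (n + 1) → Fin m,
          ∏ i, (star (B i (c i) (l i)) * B i (c i) (l (σ i))))
        = ∏ t, A c t (σ t) := by
    intro σ c
    have step1 : ∀ l : Fin (n + 1) → Fin m,
        (∏ i, (star (B i (c i) (l i)) * B i (c i) (l (σ i))))
          = ∏ i, (star (B i (c i) (l i)) * B (σ⁻¹ i) (c (σ⁻¹ i)) (l i)) := by
      intro l
      rw [Finset.prod_mul_distrib, Finset.prod_mul_distrib]
      congr 1
      rw [← Equiv.prod_comp σ (fun j => B (σ⁻¹ j) (c (σ⁻¹ j)) (l j))]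
      simp
    simp_rw [step1]
    rw [sum_prod_pi_eq (fun i a => star (B i (c i) a) * B (σ⁻¹ i) (c (σ⁻¹ i)) a)]
    rw [← Equiv.prod_comp σ (fun i => ∑ a, star (B i (c i) a) * B (σ⁻¹ i) (c (σ⁻¹ i)) a)]
    refine Finset.prod_congr rfl fun t _ => ?_
    rw [hAapp]
    simp [mul_comm]
  have h1 : (0:ℂ) ≤ ∑ c : Fin (n + 1) → Fin m,
      ∑ σ : Equiv.Perm (Fin (n + 1)), f σ * ∏ t, A c t (σ t) :=
    Finset.sum_nonneg fun c _ => hf (A c) (hApsd c)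
  have h2 : (∑ c : Fin (n + 1) → Fin m,
        ∑ σ : Equiv.Perm (Fin (n + 1)), f σ * ∏ t, A c t (σ t))
      = ∑ σ : Equiv.Perm (Fin (n + 1)), f σ *
          (permMat (n + 1) σ⁻¹ * tensorMat Y).trace := by
    rw [Finset.sum_comm]
    refine Finset.sum_congr rfl fun σ _ => ?_
    rw [htr σ]
    simp_rw [key1 σ]
    rw [Finset.sum_comm, Finset.mul_sum]
    exact (Finset.sum_congr rfl fun c _ => by rw [key2 σ c]).symm
  exact h2 ▸ h1
end

section
/- For all positive semidefinite m×m complex matrices X, Y with tr(X) = tr(Y) = 1, the matrix (2/3)[X + Y + tr(XY)·I] − (XY + YX) is positive semidefinite. -/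
open scoped ComplexOrder
open Matrix

/-- Cauchy–Schwarz for the complex dot product. -/
lemma dot_cs {m : ℕ} (x y : Fin m → ℂ) :
    ‖star x ⬝ᵥ y‖ ^ 2 ≤ (star x ⬝ᵥ x).re * (star y ⬝ᵥ y).re := by
  let x' : EuclideanSpace ℂ (Fin m) := WithLp.toLp 2 x
  let y' : EuclideanSpace ℂ (Fin m) := WithLp.toLp 2 y
  have h1 : (inner ℂ x' y' : ℂ) = star x ⬝ᵥ y := by
    exact (dotProduct_comm _ _ : y ⬝ᵥ star x = star x ⬝ᵥ y)
  have h2 : (star x ⬝ᵥ x).re = ‖x'‖ ^ 2 := by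
    rw [← inner_self_eq_norm_sq (𝕜 := ℂ) x']
    have : (inner ℂ x' x' : ℂ) = star x ⬝ᵥ x := by
      exact (dotProduct_comm _ _ : x ⬝ᵥ star x = star x ⬝ᵥ x)
    rw [this]; rfl
  have h3 : (star y ⬝ᵥ y).re = ‖y'‖ ^ 2 := by
    rw [← inner_self_eq_norm_sq (𝕜 := ℂ) y']
    have : (inner ℂ y' y' : ℂ) = star y ⬝ᵥ y := by
      exact (dotProduct_comm _ _ : y ⬝ᵥ star y = star y ⬝ᵥ y)
    rw [this]; rfl
  rw [h2, h3, ← h1]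
  calc ‖(inner ℂ x' y' : ℂ)‖ ^ 2 = ‖(inner ℂ x' y' : ℂ)‖ ^ 2 := rfl
    _ ≤ (‖x'‖ * ‖y'‖) ^ 2 := by
        have := norm_inner_le_norm (𝕜 := ℂ) x' y'
        have h0 : (0:ℝ) ≤ ‖(inner ℂ x' y' : ℂ)‖ := norm_nonneg _
        nlinarith [norm_nonneg x', norm_nonneg y']
    _ = ‖x'‖ ^ 2 * ‖y'‖ ^ 2 := by ring

/-- folding a matrix applied on the left of a dot product to the other side -/
lemma dot_fold {m : ℕ} (M N : Matrix (Fin m) (Fin m) ℂ) (v w : Fin m → ℂ) :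
    star (M *ᵥ v) ⬝ᵥ (N *ᵥ w) = star v ⬝ᵥ (Mᴴ * N) *ᵥ w := by
  rw [star_mulVec, dotProduct_mulVec, vecMul_vecMul, ← dotProduct_mulVec]

/-- a complex number that is nonnegative equals its real part -/
lemma creal (z : ℂ) (h : 0 ≤ z) : z = (z.re : ℂ) := by
  obtain ⟨h1, h2⟩ := Complex.nonneg_iff.mp h
  exact Complex.ext (by simp) (by simp [← h2])

lemma psd_sqrt {m : ℕ} {M : Matrix (Fin m) (Fin m) ℂ} (hM : M.PosSemidef) :
    ∃ C : Matrix (Fin m) (Fin m) ℂ, Cᴴ = C ∧ C * C = M := by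
  open scoped MatrixOrder in
  exact ⟨CFC.sqrt M, (CFC.sqrt_nonneg M).posSemidef.isHermitian,
    CFC.sqrt_mul_sqrt_self M hM.nonneg⟩

/-- quadratic form is bounded by trace times norm -/
lemma quad_le_trace {m : ℕ} {M : Matrix (Fin m) (Fin m) ℂ} (hM : M.PosSemidef)
    (v : Fin m → ℂ) :
    (star v ⬝ᵥ M *ᵥ v).re ≤ M.trace.re * (star v ⬝ᵥ v).re := by
  obtain ⟨C, hCH, hCC⟩ : ∃ C : Matrix (Fin m) (Fin m) ℂ, Cᴴ = C ∧ C * C = M :=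
    psd_sqrt hM
  have hherm : ∀ i j, C j i = star (C i j) := fun i j => by
    have h := congrFun (congrFun hCH j) i
    simpa [conjTranspose_apply] using h.symm
  have key : star v ⬝ᵥ M *ᵥ v = star (C *ᵥ v) ⬝ᵥ (C *ᵥ v) := by
    rw [← hCC, ← mulVec_mulVec, dotProduct_mulVec, star_mulVec, hCH]
  rw [key]
  have htr : M.trace.re = ∑ i, ∑ j, Complex.normSq (C i j) := by
    rw [← hCC, Matrix.trace, Complex.re_sum]
    refine Finset.sum_congr rfl fun i _ => ?_
    rw [Matrix.diag_apply, Matrix.mul_apply, Complex.re_sum]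
    refine Finset.sum_congr rfl fun j _ => ?_
    rw [hherm i j]
    simp [Complex.normSq_apply, Complex.mul_re, mul_comm]
  rw [htr]
  have hquad : (star (C *ᵥ v) ⬝ᵥ (C *ᵥ v)).re
      = ∑ i, ‖(C *ᵥ v) i‖ ^ 2 := by
    rw [dotProduct, Complex.re_sum]
    refine Finset.sum_congr rfl fun i _ => ?_
    rw [Complex.sq_norm]
    simp [Complex.normSq_apply, Complex.mul_re, mul_comm]
  rw [hquad, Finset.sum_mul]
  refine Finset.sum_le_sum fun i _ => ?_
  have hcs := dot_cs (fun j => star (C i j)) v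
  have hx : star (fun j => star (C i j)) ⬝ᵥ v = (C *ᵥ v) i := by
    simp [dotProduct, mulVec]
  have hxx : (star (fun j => star (C i j)) ⬝ᵥ (fun j => star (C i j))).re
      = ∑ j, Complex.normSq (C i j) := by
    rw [dotProduct, Complex.re_sum]
    refine Finset.sum_congr rfl fun j _ => ?_
    simp [Complex.normSq_apply, Complex.mul_re]
  rw [hx, hxx] at hcs
  exact hcs

/-- trace of a PSD matrix is nonnegative -/
lemma psd_trace_nonneg {m : ℕ} {P : Matrix (Fin m) (Fin m) ℂ} (hP : P.PosSemidef) :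
    0 ≤ P.trace := by
  rw [Matrix.trace]
  apply Finset.sum_nonneg
  intro i _
  have h := hP.dotProduct_mulVec_nonneg (Pi.single i 1)
  simpa [dotProduct, mulVec, Pi.single_apply] using h

/-- trace of a product of PSD matrices is nonnegative -/
lemma trace_mul_psd_nonneg {m : ℕ} {M N : Matrix (Fin m) (Fin m) ℂ}
    (hM : M.PosSemidef) (hN : N.PosSemidef) : 0 ≤ (M * N).trace := by
  obtain ⟨A, hAH, hAA⟩ : ∃ A : Matrix (Fin m) (Fin m) ℂ, Aᴴ = A ∧ A * A = M :=
    psd_sqrt hM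
  have h1 : (M * N).trace = (Aᴴ * N * A).trace := by
    rw [hAH, ← hAA]
    exact (Matrix.trace_mul_cycle A N A).symm
  rw [h1]
  exact psd_trace_nonneg (hN.conjTranspose_mul_mul_same A)

lemma scalar_key (a b s tR pr pabs : ℝ) (ha0 : 0 ≤ a) (hb0 : 0 ≤ b) (hs0 : 0 ≤ s)
    (has : a ≤ s) (hbs : b ≤ s) (ht0 : 0 ≤ tR) (ht1 : tR ≤ 1)
    (hpr : pr ≤ pabs) (hpabs : 0 ≤ pabs) (hp2 : pabs ^ 2 ≤ tR * a * b) :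
    0 ≤ (2/3 : ℝ) * (a + b + tR * s) - 2 * pr := by
  have h9 : 9 * (tR * a * b) ≤ (a + b + tR * s) ^ 2 := by
    nlinarith [sq_nonneg (a - b), sq_nonneg (a - tR * s), sq_nonneg (b - tR * s),
      mul_nonneg (mul_nonneg ht0 ha0) (sub_nonneg.2 hbs),
      mul_nonneg (mul_nonneg ht0 hb0) (sub_nonneg.2 has),
      mul_nonneg (mul_nonneg (sub_nonneg.2 ht1) ha0) hb0,
      mul_nonneg ht0 hs0]
  have hS0 : 0 ≤ a + b + tR * s := by
    have := mul_nonneg ht0 hs0; linarith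
  have h3 : 3 * pabs ≤ a + b + tR * s := by
    have hsq : (3 * pabs) ^ 2 ≤ (a + b + tR * s) ^ 2 := by nlinarith
    exact (pow_le_pow_iff_left₀ (by positivity) hS0 two_ne_zero).mp hsq
  linarith

/-- For PSD matrices `X, Y` of trace one:
`(2/3)[X + Y + tr(XY)·I] − (XY + YX) ≥ 0` in the Löwner order. -/
theorem loewner_upper_anticommutator (m : ℕ) (X Y : Matrix (Fin m) (Fin m) ℂ)
    (hX : X.PosSemidef) (hY : Y.PosSemidef)
    (htX : X.trace = 1) (htY : Y.trace = 1) :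
    (((2 : ℂ)/3) • (X + Y + (X * Y).trace • (1 : Matrix (Fin m) (Fin m) ℂ))
      - (X * Y + Y * X)).PosSemidef := by
  set t : ℂ := (X * Y).trace with htdef
  obtain ⟨A, hAH, hAA⟩ : ∃ A : Matrix (Fin m) (Fin m) ℂ, Aᴴ = A ∧ A * A = X :=
    psd_sqrt hX
  obtain ⟨B, hBH, hBB⟩ : ∃ B : Matrix (Fin m) (Fin m) ℂ, Bᴴ = B ∧ B * B = Y :=
    psd_sqrt hY
  have ht0 : 0 ≤ t := by
    rw [htdef]; exact trace_mul_psd_nonneg hX hY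
  have htreal : t = (t.re : ℂ) := creal _ ht0
  have htR0 : 0 ≤ t.re := (Complex.nonneg_iff.mp ht0).1
  have hstar_t : star t = t := by
    rw [htreal]; exact Complex.conj_ofReal _
  -- t.re ≤ 1
  have ht1 : t.re ≤ 1 := by
    have h1Y : (1 - Y : Matrix (Fin m) (Fin m) ℂ).PosSemidef := by
      refine Matrix.PosSemidef.of_dotProduct_mulVec_nonneg ?_ ?_
      · show (1 - Y)ᴴ = 1 - Y
        rw [conjTranspose_sub, conjTranspose_one, hY.1.eq]
      · intro x
        have hq := hY.dotProduct_mulVec_nonneg x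
        have hx1 : (0:ℂ) ≤ star x ⬝ᵥ x := by
          simpa using (Matrix.PosSemidef.one (n := Fin m) (R := ℂ)).dotProduct_mulVec_nonneg x
        obtain ⟨hq1, hq2⟩ := Complex.nonneg_iff.mp hq
        obtain ⟨hx1a, hx1b⟩ := Complex.nonneg_iff.mp hx1
        have hle := quad_le_trace hY x
        rw [htY, Complex.one_re, one_mul] at hle
        simp only [sub_mulVec, one_mulVec, dotProduct_sub]
        rw [Complex.nonneg_iff]
        constructor
        · rw [Complex.sub_re]; linarith
        · rw [Complex.sub_im]; rw [← hq2, ← hx1b]; ring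
    have hnn := trace_mul_psd_nonneg hX h1Y
    have hexp : (X * (1 - Y)).trace = 1 - t := by
      rw [Matrix.mul_sub, Matrix.mul_one, Matrix.trace_sub, htX, htdef]
    rw [hexp] at hnn
    have h := (Complex.nonneg_iff.mp hnn).1
    rw [Complex.sub_re, Complex.one_re] at h
    linarith
  refine Matrix.PosSemidef.of_dotProduct_mulVec_nonneg ?_ ?_
  · -- Hermitian
    show (((2 : ℂ)/3) • (X + Y + t • 1) - (X * Y + Y * X))ᴴ
        = ((2 : ℂ)/3) • (X + Y + t • 1) - (X * Y + Y * X)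
    have h23 : star ((2:ℂ)/3) = (2:ℂ)/3 := by norm_num
    rw [conjTranspose_sub, conjTranspose_smul, conjTranspose_add, conjTranspose_add,
      conjTranspose_smul, conjTranspose_add, conjTranspose_mul, conjTranspose_mul, conjTranspose_one,
      hX.1.eq, hY.1.eq, h23, hstar_t, add_comm (Y * X) (X * Y)]
  · intro v
    have hx1 : (0:ℂ) ≤ star v ⬝ᵥ v := by
      simpa using (Matrix.PosSemidef.one (n := Fin m) (R := ℂ)).dotProduct_mulVec_nonneg v
    set p := star v ⬝ᵥ (X * Y) *ᵥ v with hp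
    set aR := (star v ⬝ᵥ X *ᵥ v).re with haR
    set bR := (star v ⬝ᵥ Y *ᵥ v).re with hbR
    set sR := (star v ⬝ᵥ v).re with hsR
    have hqX : star v ⬝ᵥ X *ᵥ v = (aR : ℂ) := by
      rw [haR]; exact creal _ (hX.dotProduct_mulVec_nonneg v)
    have hqY : star v ⬝ᵥ Y *ᵥ v = (bR : ℂ) := by
      rw [hbR]; exact creal _ (hY.dotProduct_mulVec_nonneg v)
    have hsv : star v ⬝ᵥ v = (sR : ℂ) := by
      rw [hsR]; exact creal _ hx1
    have hpYX : star v ⬝ᵥ (Y * X) *ᵥ v = star p := by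
      rw [hp]
      have h := star_dotProduct ((X * Y) *ᵥ v) v
      rw [star_mulVec, conjTranspose_mul, hX.1.eq, hY.1.eq, ← dotProduct_mulVec] at h
      exact h
    -- real side facts
    have ha0 : 0 ≤ aR := by rw [haR]; exact (Complex.nonneg_iff.mp (hX.dotProduct_mulVec_nonneg v)).1
    have hb0 : 0 ≤ bR := by rw [hbR]; exact (Complex.nonneg_iff.mp (hY.dotProduct_mulVec_nonneg v)).1
    have hs0 : 0 ≤ sR := by rw [hsR]; exact (Complex.nonneg_iff.mp hx1).1
    have has : aR ≤ sR := by
      have h := quad_le_trace hX v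
      rw [htX, Complex.one_re, one_mul] at h
      rw [haR, hsR]; exact h
    have hbs : bR ≤ sR := by
      have h := quad_le_trace hY v
      rw [htY, Complex.one_re, one_mul] at h
      rw [hbR, hsR]; exact h
    -- the key bound |p|^2 ≤ t.re * aR * bR
    have hu : p = star ((B * X) *ᵥ v) ⬝ᵥ (B *ᵥ v) := by
      rw [dot_fold, conjTranspose_mul, hBH, hX.1.eq, Matrix.mul_assoc, hBB, hp]
    have hcs := dot_cs ((B * X) *ᵥ v) (B *ᵥ v)
    rw [← hu] at hcs
    have h1 : star ((B * X) *ᵥ v) ⬝ᵥ ((B * X) *ᵥ v) = star v ⬝ᵥ (X * Y * X) *ᵥ v := by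
      rw [dot_fold, conjTranspose_mul, hBH, hX.1.eq, Matrix.mul_assoc,
        ← Matrix.mul_assoc B B X, hBB, ← Matrix.mul_assoc]
    have h2 : star (B *ᵥ v) ⬝ᵥ (B *ᵥ v) = star v ⬝ᵥ Y *ᵥ v := by
      rw [dot_fold, hBH, hBB]
    rw [h1, h2] at hcs
    have h3 : (star v ⬝ᵥ (X * Y * X) *ᵥ v).re ≤ t.re * aR := by
      have hpsd : (A * Y * A).PosSemidef := by
        have h := hY.conjTranspose_mul_mul_same A
        rwa [hAH] at h
      have hq := quad_le_trace hpsd (A *ᵥ v)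
      have e1 : star (A *ᵥ v) ⬝ᵥ (A * Y * A) *ᵥ (A *ᵥ v) = star v ⬝ᵥ (X * Y * X) *ᵥ v := by
        rw [mulVec_mulVec, dot_fold, hAH, ← hAA]
        simp only [Matrix.mul_assoc]
      have e2 : (A * Y * A).trace = t := by
        rw [htdef, ← hAA]
        exact Matrix.trace_mul_cycle A Y A
      have e3 : star (A *ᵥ v) ⬝ᵥ (A *ᵥ v) = star v ⬝ᵥ X *ᵥ v := by
        rw [dot_fold, hAH, hAA]
      rw [e1, e2, e3, ← haR] at hq
      exact hq
    rw [← hbR] at hcs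
    have hp2 : ‖p‖ ^ 2 ≤ t.re * aR * bR := by
      calc ‖p‖ ^ 2 ≤ (star v ⬝ᵥ (X * Y * X) *ᵥ v).re * bR := hcs
        _ ≤ t.re * aR * bR := mul_le_mul_of_nonneg_right h3 hb0
    -- rewrite the quadratic form as a real number
    have hE : star v ⬝ᵥ (((2 : ℂ)/3) • (X + Y + t • 1) - (X * Y + Y * X)) *ᵥ v
        = (((2:ℝ)/3 * (aR + bR + t.re * sR) - 2 * p.re : ℝ) : ℂ) := by
      simp only [sub_mulVec, add_mulVec, smul_mulVec, one_mulVec,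
        dotProduct_sub, dotProduct_add, dotProduct_smul, smul_eq_mul]
      rw [← hp, hpYX, hqX, hqY, hsv, htreal, Complex.star_def, Complex.add_conj]
      push_cast
      simp only [Complex.ofReal_re]
    rw [hE, Complex.zero_le_real]
    exact scalar_key aR bR sR t.re p.re ‖p‖ ha0 hb0 hs0 has hbs htR0 ht1
      (Complex.re_le_norm p) (norm_nonneg p) hp2
end

section
/- For all positive semidefinite m×m complex matrices X, Y with tr(X) = tr(Y) = 1, the matrix XY + YX − X − Y − (tr(XY) − 1)·I is positive semidefinite. -/
open scoped ComplexOrder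
open Matrix

section Helpers

set_option linter.unusedSectionVars false

variable {n : Type*} [Fintype n] [DecidableEq n]

private lemma trace_mul_vecMulVec' (M : Matrix n n ℂ) (x : n → ℂ) :
    (M * vecMulVec x (star x)).trace = star x ⬝ᵥ (M *ᵥ x) := by
  simp only [Matrix.trace, Matrix.diag, Matrix.mul_apply, Matrix.vecMulVec_apply,
    dotProduct, Matrix.mulVec, Pi.star_apply, Finset.mul_sum]
  exact Finset.sum_congr rfl fun i _ => Finset.sum_congr rfl fun j _ => by ring

private lemma vecMulVec_mul_mul' (M : Matrix n n ℂ) (x : n → ℂ) :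
    vecMulVec x (star x) * M * vecMulVec x (star x)
      = (star x ⬝ᵥ (M *ᵥ x)) • vecMulVec x (star x) := by
  ext i j
  simp only [Matrix.mul_apply, Matrix.vecMulVec_apply, Matrix.smul_apply,
    dotProduct, Matrix.mulVec, Pi.star_apply, smul_eq_mul,
    Finset.sum_mul, Finset.mul_sum]
  rw [Finset.sum_comm]
  exact Finset.sum_congr rfl fun k _ => Finset.sum_congr rfl fun l _ => by ring

private lemma trace_conjTranspose_mul_self_nonneg' (E : Matrix n n ℂ) :
    0 ≤ (Eᴴ * E).trace := by
  simp only [Matrix.trace, Matrix.diag, Matrix.mul_apply, Matrix.conjTranspose_apply]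
  refine Finset.sum_nonneg fun i _ => Finset.sum_nonneg fun j _ => ?_
  exact star_mul_self_nonneg _

open scoped MatrixOrder in
private lemma trace_mul_psd_nonneg' {A B : Matrix n n ℂ} (hA : A.PosSemidef) (hB : B.PosSemidef) :
    0 ≤ (A * B).trace := by
  obtain ⟨C, rfl⟩ := CStarAlgebra.nonneg_iff_eq_star_mul_self.mp hA.nonneg
  obtain ⟨D, rfl⟩ := CStarAlgebra.nonneg_iff_eq_star_mul_self.mp hB.nonneg
  rw [Matrix.star_eq_conjTranspose, Matrix.star_eq_conjTranspose]
  have h : (Cᴴ * C * (Dᴴ * D)).trace = ((C * Dᴴ)ᴴ * (C * Dᴴ)).trace := by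
    rw [conjTranspose_mul, conjTranspose_conjTranspose, ← mul_assoc,
      trace_mul_cycle (Cᴴ * C) Dᴴ D]
    congr 1
    simp [mul_assoc]
  rw [h]
  exact trace_conjTranspose_mul_self_nonneg' _

private lemma smul_one_sub_psd' {B : Matrix n n ℂ} (hB : B.PosSemidef) :
    (B.trace • (1 : Matrix n n ℂ) - B).PosSemidef := by
  set U : Matrix n n ℂ := (IsHermitian.eigenvectorUnitary hB.1 : Matrix n n ℂ) with hUdef
  have hUU : U * star U = 1 := Matrix.mem_unitaryGroup_iff.mp (IsHermitian.eigenvectorUnitary hB.1).2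
  have hUU' : star U * U = 1 := Matrix.mem_unitaryGroup_iff'.mp (IsHermitian.eigenvectorUnitary hB.1).2
  have hspec : B = U * diagonal (RCLike.ofReal ∘ hB.1.eigenvalues) * star U := hB.1.spectral_theorem
  set d : n → ℂ := fun i => B.trace - (hB.1.eigenvalues i : ℂ) with hd
  have htr : B.trace = ∑ i, (hB.1.eigenvalues i : ℂ) := by
    conv_lhs => rw [hspec]
    rw [Matrix.trace_mul_cycle, hUU', one_mul, Matrix.trace_diagonal]
    simp
  have hdnonneg : 0 ≤ d := by
    intro i
    simp only [hd, htr, Pi.zero_apply]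
    rw [← Finset.sum_erase_add _ _ (Finset.mem_univ i)]
    simp only [add_sub_cancel_right]
    rw [← Complex.ofReal_sum]
    norm_cast
    exact Finset.sum_nonneg fun j _ => hB.eigenvalues_nonneg j
  have key : B.trace • (1 : Matrix n n ℂ) - B = U * diagonal d * star U := by
    have h2 : (diagonal d : Matrix n n ℂ)
        = B.trace • 1 - diagonal (RCLike.ofReal ∘ hB.1.eigenvalues) := by
      ext i j
      by_cases h : i = j <;> simp [hd, h, Matrix.one_apply]
    rw [h2, Matrix.mul_sub, Matrix.sub_mul, ← hspec]
    congr 1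
    rw [Matrix.mul_smul, Matrix.smul_mul, mul_one, hUU]
  rw [key]
  simpa [Matrix.star_eq_conjTranspose] using
    (Matrix.PosSemidef.diagonal hdnonneg).mul_mul_conjTranspose_same U

private lemma trace_mul_le_trace_mul_trace' {A B : Matrix n n ℂ}
    (hA : A.PosSemidef) (hB : B.PosSemidef) :
    (A * B).trace ≤ A.trace * B.trace := by
  have h := trace_mul_psd_nonneg' hA (smul_one_sub_psd' hB)
  rw [Matrix.mul_sub, Matrix.trace_sub, Matrix.mul_smul, mul_one, Matrix.trace_smul,
    sub_nonneg, smul_eq_mul] at h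
  calc (A * B).trace ≤ B.trace * A.trace := h
  _ = A.trace * B.trace := mul_comm _ _

private lemma nonneg_of_cube_mul_nonneg' (s g : ℂ) (hs : 0 < s) (h : 0 ≤ s ^ 3 * g) :
    0 ≤ g := by
  have h3 : (0:ℂ) < s ^ 3 := pow_pos hs 3
  obtain ⟨hre, him⟩ := Complex.pos_iff.mp h3
  have hinv : 0 ≤ (s ^ 3)⁻¹ := by
    rw [Complex.nonneg_iff]
    constructor
    · rw [Complex.inv_re]
      exact div_nonneg hre.le (Complex.normSq_nonneg _)
    · rw [Complex.inv_im, ← him]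
      simp
  have h2 := mul_nonneg hinv h
  rwa [← mul_assoc, inv_mul_cancel₀ h3.ne', one_mul] at h2

end Helpers

/-- For PSD matrices `X, Y` of trace one:
`XY + YX − X − Y − (tr(XY) − 1)·I ≥ 0` in the Löwner order. -/
theorem loewner_lower_anticommutator (m : ℕ) (X Y : Matrix (Fin m) (Fin m) ℂ)
    (hX : X.PosSemidef) (hY : Y.PosSemidef)
    (htX : X.trace = 1) (htY : Y.trace = 1) :
    (X * Y + Y * X - X - Y
      - ((X * Y).trace - 1) • (1 : Matrix (Fin m) (Fin m) ℂ)).PosSemidef := by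
  set t : ℂ := (X * Y).trace with htdef
  have htstar : star t = t := by
    rw [htdef, ← Matrix.trace_conjTranspose, conjTranspose_mul, hX.1.eq, hY.1.eq,
      trace_mul_comm]
  refine Matrix.PosSemidef.of_dotProduct_mulVec_nonneg ?_ ?_
  · -- Hermitian
    unfold Matrix.IsHermitian
    simp only [conjTranspose_sub, conjTranspose_add, conjTranspose_mul, conjTranspose_smul,
      hX.1.eq, hY.1.eq, conjTranspose_one, star_sub, htstar, star_one]
    abel
  · intro x
    by_cases hx : x = 0
    · simp [hx]
    -- scalars
    set s : ℂ := star x ⬝ᵥ x with hsdef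
    have hs : 0 < s := Matrix.dotProduct_star_self_pos_iff.mpr hx
    set Q : Matrix (Fin m) (Fin m) ℂ := vecMulVec x (star x) with hQdef
    set P : Matrix (Fin m) (Fin m) ℂ := s • 1 - Q with hPdef
    set a : ℂ := star x ⬝ᵥ X *ᵥ x with hadef
    set b : ℂ := star x ⬝ᵥ Y *ᵥ x with hbdef
    have hQQ : Q * Q = s • Q := by
      have h := vecMulVec_mul_mul' (1 : Matrix (Fin m) (Fin m) ℂ) x
      simpa [hQdef, hsdef] using h
    have hPP : P * P = s • P := by
      rw [hPdef]
      simp only [Matrix.sub_mul, Matrix.mul_sub, Matrix.smul_mul, Matrix.mul_smul,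
        one_mul, mul_one, hQQ, smul_sub]
      abel
    have hsstar : star s = s := (Matrix.star_dotProduct x x).symm
    have hQH : Qᴴ = Q := by
      ext i j
      simp [hQdef, Matrix.conjTranspose_apply, Matrix.vecMulVec_apply, mul_comm]
    have hPH : Pᴴ = P := by
      rw [hPdef, conjTranspose_sub, conjTranspose_smul, conjTranspose_one, hQH, hsstar]
    have hApsd : (P * X * P).PosSemidef := by
      have h := hX.conjTranspose_mul_mul_same P
      rwa [hPH] at h
    have hBpsd : (P * Y * P).PosSemidef := by
      have h := hY.conjTranspose_mul_mul_same P
      rwa [hPH] at h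
    have trQ : ∀ M : Matrix (Fin m) (Fin m) ℂ, (M * Q).trace = star x ⬝ᵥ M *ᵥ x := by
      intro M
      rw [hQdef]
      exact trace_mul_vecMulVec' M x
    have trPM : ∀ M : Matrix (Fin m) (Fin m) ℂ,
        (P * M).trace = s * M.trace - star x ⬝ᵥ M *ᵥ x := by
      intro M
      rw [hPdef, Matrix.sub_mul, Matrix.trace_sub, Matrix.smul_mul, one_mul,
        Matrix.trace_smul, smul_eq_mul, trace_mul_comm Q M, trQ]
    have trA : (P * X * P).trace = s * (s - a) := by
      rw [trace_mul_cycle P X P, hPP, Matrix.smul_mul, Matrix.trace_smul, smul_eq_mul,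
        trPM X, htX, ← hadef]
      ring
    have trB : (P * Y * P).trace = s * (s - b) := by
      rw [trace_mul_cycle P Y P, hPP, Matrix.smul_mul, Matrix.trace_smul, smul_eq_mul,
        trPM Y, htY, ← hbdef]
      ring
    set qXY : ℂ := star x ⬝ᵥ (X * Y) *ᵥ x with hqXYdef
    set qYX : ℂ := star x ⬝ᵥ (Y * X) *ᵥ x with hqYXdef
    have hQYQ : Q * Y * Q = b • Q := by
      rw [hQdef, hbdef]
      exact vecMulVec_mul_mul' Y x
    have em : (P * Y) * (P * X)
        = (s * s) • (Y * X) - s • (Y * (Q * X)) - s • (Q * (Y * X)) + Q * (Y * (Q * X)) := by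
      rw [hPdef]
      simp only [Matrix.sub_mul, Matrix.mul_sub, Matrix.smul_mul, Matrix.mul_smul,
        one_mul, mul_one, smul_smul, smul_sub, mul_assoc]
      abel
    have trYQX : (Y * (Q * X)).trace = qXY := by
      rw [← mul_assoc, trace_mul_comm, ← mul_assoc, trQ]
    have trQYX : (Q * (Y * X)).trace = qYX := by
      rw [trace_mul_comm, trQ]
    have trQYQX : (Q * (Y * (Q * X))).trace = b * a := by
      have h : Q * (Y * (Q * X)) = b • (Q * X) := by
        rw [show Q * (Y * (Q * X)) = (Q * Y * Q) * X from by noncomm_ring, hQYQ,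
          Matrix.smul_mul]
      rw [h, Matrix.trace_smul, smul_eq_mul, trace_mul_comm, trQ, ← hadef]
    have e3 : ((P * Y) * (P * X)).trace = s * s * t - s * qXY - s * qYX + b * a := by
      rw [em]
      simp only [Matrix.trace_add, Matrix.trace_sub, Matrix.trace_smul, smul_eq_mul]
      rw [trYQX, trQYX, trQYQX, trace_mul_comm Y X, ← htdef]
    have trAB : ((P * X * P) * (P * Y * P)).trace
        = s * (s * (s * s * t - s * qXY - s * qYX + b * a)) := by
      have e1 : (P * X * P) * (P * Y * P) = s • ((P * X) * (P * (Y * P))) := by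
        rw [show (P * X * P) * (P * Y * P) = (P * X) * ((P * P) * (Y * P)) from by
          noncomm_ring, hPP, Matrix.smul_mul, Matrix.mul_smul]
      have e2 : (P * (Y * P)) * (P * X) = s • ((P * Y) * (P * X)) := by
        rw [show (P * (Y * P)) * (P * X) = (P * Y) * ((P * P) * X) from by noncomm_ring,
          hPP, Matrix.smul_mul, Matrix.mul_smul]
      rw [e1, Matrix.trace_smul, smul_eq_mul, trace_mul_comm, e2, Matrix.trace_smul,
        smul_eq_mul, e3]
    have key := trace_mul_le_trace_mul_trace' hApsd hBpsd
    rw [trA, trB, trAB] at key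
    have hgoal : star x ⬝ᵥ ((X * Y + Y * X - X - Y - (t - 1) • 1) *ᵥ x)
        = qXY + qYX - a - b - (t - 1) * s := by
      rw [Matrix.sub_mulVec, Matrix.sub_mulVec, Matrix.sub_mulVec, Matrix.add_mulVec,
        Matrix.smul_mulVec, Matrix.one_mulVec]
      rw [dotProduct_sub, dotProduct_sub, dotProduct_sub, dotProduct_add, dotProduct_smul]
      rw [hqXYdef, hqYXdef, hadef, hbdef, hsdef, smul_eq_mul]
    rw [hgoal]
    apply nonneg_of_cube_mul_nonneg' s _ hs
    have hring : s ^ 3 * (qXY + qYX - a - b - (t - 1) * s)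
        = s * (s - a) * (s * (s - b)) - s * (s * (s * s * t - s * qXY - s * qYX + b * a)) := by
      ring
    rw [hring]
    exact sub_nonneg.mpr key
end

section
/- For all positive semidefinite m×m complex matrices X, Y, Z with tr(X) = tr(Y) = tr(Z) = 1, the matrix 3·I − [tr(XY)·Z + tr(XZ)·Y + tr(YZ)·X] is positive semidefinite. -/
open scoped ComplexOrder
open Matrix

variable {m : ℕ}

lemma psd_trace_nonneg_s12 {M : Matrix (Fin m) (Fin m) ℂ} (hM : M.PosSemidef) :
    0 ≤ M.trace := by
  rw [Matrix.trace]
  refine Finset.sum_nonneg fun i _ => ?_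
  have h := hM.dotProduct_mulVec_nonneg (Pi.single i 1)
  have : star (Pi.single i 1 : Fin m → ℂ) ⬝ᵥ M *ᵥ Pi.single i 1 = M.diag i := by
    simp [dotProduct, Matrix.mulVec, Pi.single_apply,
      apply_ite (star : ℂ → ℂ), Finset.sum_ite_eq]
  rwa [this] at h

open scoped MatrixOrder in
lemma psd_trace_mul_nonneg {A B : Matrix (Fin m) (Fin m) ℂ}
    (hA : A.PosSemidef) (hB : B.PosSemidef) : 0 ≤ (A * B).trace := by
  set S := CFC.sqrt A with hS
  have h2 : (A * B).trace = (Sᴴ * B * S).trace := by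
    have hherm : Sᴴ = S := (CFC.sqrt_nonneg A).posSemidef.isHermitian
    rw [hherm]
    calc (A * B).trace = (S * S * B).trace := by rw [hS, CFC.sqrt_mul_sqrt_self A hA.nonneg]
    _ = (S * (S * B)).trace := by rw [Matrix.mul_assoc]
    _ = (S * B * S).trace := by rw [Matrix.trace_mul_comm, Matrix.mul_assoc]
  rw [h2]
  exact psd_trace_nonneg_s12 (hB.conjTranspose_mul_mul_same S)

lemma outer_psd (x : Fin m → ℂ) :
    ((star x ⬝ᵥ x) • (1 : Matrix (Fin m) (Fin m) ℂ) - vecMulVec x (star x)).PosSemidef := by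
  refine Matrix.PosSemidef.of_dotProduct_mulVec_nonneg ?_ ?_
  · show _ᴴ = _
    rw [conjTranspose_sub, conjTranspose_smul, conjTranspose_one]
    congr 1
    · congr 1
      simp [dotProduct, Finset.mul_sum, mul_comm]
    · ext i j
      simp [vecMulVec, conjTranspose_apply, mul_comm]
  · intro v
    have key : star v ⬝ᵥ ((star x ⬝ᵥ x) • (1 : Matrix (Fin m) (Fin m) ℂ)
          - vecMulVec x (star x)) *ᵥ v
        = (star x ⬝ᵥ x) * (star v ⬝ᵥ v) - star (star x ⬝ᵥ v) * (star x ⬝ᵥ v) := by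
      rw [sub_mulVec, dotProduct_sub, smul_mulVec, dotProduct_smul, one_mulVec,
        smul_eq_mul]
      have hmv : (vecMulVec x (star x)) *ᵥ v = (star x ⬝ᵥ v) • x := by
        ext i
        simp [mulVec, vecMulVec_apply, dotProduct, Finset.mul_sum, mul_assoc]
        rw [Finset.sum_mul]
        exact Finset.sum_congr rfl fun j _ => by ring
      rw [hmv, dotProduct_smul, smul_eq_mul, mul_comm]
      congr 1
      simp only [dotProduct, star_sum, StarMul.star_mul, star_star, Pi.star_apply]
      exact mul_comm _ _
    rw [key]
    -- Cauchy-Schwarz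
    set X : EuclideanSpace ℂ (Fin m) := WithLp.toLp 2 x
    set V : EuclideanSpace ℂ (Fin m) := WithLp.toLp 2 v
    have hxx : star x ⬝ᵥ x = ((‖X‖ ^ 2 : ℝ) : ℂ) := by
      rw [dotProduct_comm, ← EuclideanSpace.inner_toLp_toLp, inner_self_eq_norm_sq_to_K]
      norm_cast
    have hvv : star v ⬝ᵥ v = ((‖V‖ ^ 2 : ℝ) : ℂ) := by
      rw [dotProduct_comm, ← EuclideanSpace.inner_toLp_toLp, inner_self_eq_norm_sq_to_K]
      norm_cast
    have hc : star x ⬝ᵥ v = (inner ℂ X V : ℂ) := by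
      rw [dotProduct_comm]; exact (EuclideanSpace.inner_toLp_toLp x v).symm
    rw [hxx, hvv, hc]
    have hC : star (inner ℂ X V : ℂ) * (inner ℂ X V : ℂ) = ((‖(inner ℂ X V : ℂ)‖ ^ 2 : ℝ) : ℂ) := by
      rw [RCLike.star_def, RCLike.conj_mul]
      norm_cast
    rw [hC, ← Complex.ofReal_mul, ← Complex.ofReal_sub]
    rw [Complex.zero_le_real]
    have := norm_inner_le_norm (𝕜 := ℂ) X V
    nlinarith [norm_nonneg (inner ℂ X V : ℂ), norm_nonneg X, norm_nonneg V]

lemma quad_le {Z : Matrix (Fin m) (Fin m) ℂ} (hZ : Z.PosSemidef) (x : Fin m → ℂ) :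
    star x ⬝ᵥ Z *ᵥ x ≤ Z.trace * (star x ⬝ᵥ x) := by
  have h1 : 0 ≤ (Z * ((star x ⬝ᵥ x) • 1 - vecMulVec x (star x))).trace :=
    psd_trace_mul_nonneg hZ (outer_psd x)
  have h2 : (Z * ((star x ⬝ᵥ x) • 1 - vecMulVec x (star x))).trace
      = Z.trace * (star x ⬝ᵥ x) - star x ⬝ᵥ Z *ᵥ x := by
    rw [Matrix.mul_sub, trace_sub, Matrix.mul_smul, trace_smul, Matrix.mul_one, smul_eq_mul,
      mul_comm]
    congr 1
    simp only [Matrix.trace, Matrix.diag, mul_apply, vecMulVec_apply, dotProduct, mulVec]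
    congr 1; ext i
    rw [Finset.mul_sum]
    congr 1; ext j
    ring
  rw [h2] at h1
  exact sub_nonneg.1 h1

lemma trace_smul_id_sub_psd {A : Matrix (Fin m) (Fin m) ℂ} (hA : A.PosSemidef) :
    (A.trace • (1 : Matrix (Fin m) (Fin m) ℂ) - A).PosSemidef := by
  have hstar : star A.trace = A.trace := by
    rw [← Matrix.trace_conjTranspose, hA.1.eq]
  refine Matrix.PosSemidef.of_dotProduct_mulVec_nonneg ?_ ?_
  · show _ᴴ = _
    rw [conjTranspose_sub, conjTranspose_smul, conjTranspose_one, hA.1.eq, hstar]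
  · intro v
    rw [sub_mulVec, dotProduct_sub, smul_mulVec, dotProduct_smul, one_mulVec,
      smul_eq_mul]
    exact sub_nonneg.2 (quad_le hA v)

lemma trace_mul_star {A B : Matrix (Fin m) (Fin m) ℂ} (hA : A.IsHermitian)
    (hB : B.IsHermitian) : star (A * B).trace = (A * B).trace := by
  rw [← Matrix.trace_conjTranspose, conjTranspose_mul, hA.eq, hB.eq, trace_mul_comm]

lemma trace_mul_le_one {A B : Matrix (Fin m) (Fin m) ℂ} (hA : A.PosSemidef)
    (hB : B.PosSemidef) (htA : A.trace = 1) (htB : B.trace = 1) : (A * B).trace ≤ 1 := by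
  have h := psd_trace_mul_nonneg (trace_smul_id_sub_psd hA) hB
  rw [Matrix.sub_mul, Matrix.smul_mul, Matrix.one_mul, trace_sub, trace_smul, smul_eq_mul,
    htA, htB, one_mul] at h
  exact sub_nonneg.1 h

/-- For PSD matrices `X, Y, Z` of trace one:
`3·I − [tr(XY)·Z + tr(XZ)·Y + tr(YZ)·X] ≥ 0` in the Löwner order. -/
theorem a4_degree_three_inequality (m : ℕ) (X Y Z : Matrix (Fin m) (Fin m) ℂ)
    (hX : X.PosSemidef) (hY : Y.PosSemidef) (hZ : Z.PosSemidef)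
    (htX : X.trace = 1) (htY : Y.trace = 1) (htZ : Z.trace = 1) :
    ((3 : ℂ) • (1 : Matrix (Fin m) (Fin m) ℂ)
      - ((X * Y).trace • Z + (X * Z).trace • Y + (Y * Z).trace • X)).PosSemidef := by
  set a := (X * Y).trace with ha
  set b := (X * Z).trace with hb
  set c := (Y * Z).trace with hc
  have ha0 : 0 ≤ a := psd_trace_mul_nonneg hX hY
  have hb0 : 0 ≤ b := psd_trace_mul_nonneg hX hZ
  have hc0 : 0 ≤ c := psd_trace_mul_nonneg hY hZ
  have ha1 : a ≤ 1 := trace_mul_le_one hX hY htX htY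
  have hb1 : b ≤ 1 := trace_mul_le_one hX hZ htX htZ
  have hc1 : c ≤ 1 := trace_mul_le_one hY hZ htY htZ
  refine Matrix.PosSemidef.of_dotProduct_mulVec_nonneg ?_ ?_
  · show _ᴴ = _
    rw [conjTranspose_sub, conjTranspose_smul, conjTranspose_one, conjTranspose_add,
      conjTranspose_add, conjTranspose_smul, conjTranspose_smul, conjTranspose_smul,
      hX.1.eq, hY.1.eq, hZ.1.eq, trace_mul_star hX.1 hY.1, trace_mul_star hX.1 hZ.1,
      trace_mul_star hY.1 hZ.1]
    norm_num
    rfl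
  · intro v
    rw [sub_mulVec, dotProduct_sub, add_mulVec, add_mulVec, dotProduct_add, dotProduct_add,
      smul_mulVec, smul_mulVec, smul_mulVec, smul_mulVec,
      dotProduct_smul, dotProduct_smul, dotProduct_smul, dotProduct_smul, one_mulVec,
      smul_eq_mul, smul_eq_mul, smul_eq_mul, smul_eq_mul]
    have hZle : star v ⬝ᵥ Z *ᵥ v ≤ star v ⬝ᵥ v := by
      have := quad_le hZ v; rwa [htZ, one_mul] at this
    have hYle : star v ⬝ᵥ Y *ᵥ v ≤ star v ⬝ᵥ v := by
      have := quad_le hY v; rwa [htY, one_mul] at this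
    have hXle : star v ⬝ᵥ X *ᵥ v ≤ star v ⬝ᵥ v := by
      have := quad_le hX v; rwa [htX, one_mul] at this
    have h1 : a * (star v ⬝ᵥ Z *ᵥ v) ≤ star v ⬝ᵥ v :=
      le_trans (by simpa using mul_le_mul_of_nonneg_right ha1 (hZ.dotProduct_mulVec_nonneg v)) hZle
    have h2 : b * (star v ⬝ᵥ Y *ᵥ v) ≤ star v ⬝ᵥ v :=
      le_trans (by simpa using mul_le_mul_of_nonneg_right hb1 (hY.dotProduct_mulVec_nonneg v)) hYle
    have h3 : c * (star v ⬝ᵥ X *ᵥ v) ≤ star v ⬝ᵥ v :=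
      le_trans (by simpa using mul_le_mul_of_nonneg_right hc1 (hX.dotProduct_mulVec_nonneg v)) hXle
    have hsum := add_le_add (add_le_add h1 h2) h3
    refine sub_nonneg.2 (le_trans hsum (le_of_eq ?_))
    ring
end

section
/- Let ω = e^{2πi/3}. For all positive semidefinite m×m complex matrices X, Y, Z with tr(X) = tr(Y) = tr(Z) = 1, the matrix I + L + ωM + ω̄M* is positive semidefinite, where L = tr(XY)Z + tr(XZ)Y + tr(YZ)X and M = tr(ZYX)·I + XY + YZ + ZX, and M* is the conjugate transpose of M. -/
set_option maxHeartbeats 2000000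
open scoped ComplexOrder ComplexConjugate
open Matrix hiding col

namespace A4Ineq

def ptab : Fin 12 → Fin 4 → Fin 4 :=
  ![![0,1,2,3], ![1,0,3,2], ![2,3,0,1], ![3,2,1,0],
    ![0,2,3,1], ![2,0,1,3], ![3,1,0,2], ![1,3,2,0],
    ![0,3,1,2], ![1,2,0,3], ![2,1,3,0], ![3,0,2,1]]

def rtab : Fin 12 → Fin 12 → Fin 12 :=
  ![![0,1,2,3,8,9,10,11,4,5,6,7],
    ![1,0,3,2,9,8,11,10,7,6,5,4],
    ![2,3,0,1,10,11,8,9,5,4,7,6],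
    ![3,2,1,0,11,10,9,8,6,7,4,5],
    ![4,5,6,7,0,2,3,1,8,11,9,10],
    ![5,4,7,6,2,0,1,3,10,9,11,8],
    ![6,7,4,5,3,1,0,2,11,8,10,9],
    ![7,6,5,4,1,3,2,0,9,10,8,11],
    ![8,11,9,10,4,6,7,5,0,1,2,3],
    ![9,10,8,11,7,5,4,6,1,0,3,2],
    ![10,9,11,8,5,7,6,4,2,3,0,1],
    ![11,8,10,9,6,4,5,7,3,2,1,0]]

def c3 : Fin 12 → ℕ := ![0,0,0,0,1,1,1,1,2,2,2,2]

lemma hcomp : ∀ t s i, ptab t i = ptab (rtab t s) (ptab s i) := by decide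
lemma hbij : ∀ s, Function.Bijective (fun t => rtab t s) := by decide
lemma hpbij : ∀ s, Function.Bijective (ptab s) := by decide
lemma hc3 : ∀ t s, (c3 s + 2 * c3 t) % 3 = 2 * c3 (rtab t s) % 3 := by decide

lemma sum12 {M : Type*} [AddCommMonoid M] (F : Fin 12 → M) :
    ∑ r, F r = F 0 + F 1 + F 2 + F 3 + F 4 + F 5 + F 6 + F 7 + F 8 + F 9 + F 10 + F 11 := by
  simp [Fin.sum_univ_succ]; abel

variable {m : ℕ}

def col (A : Matrix (Fin m) (Fin m) ℂ) (k : Fin m) : Fin m → ℂ := fun i => A i k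

lemma ip_col_col (A B : Matrix (Fin m) (Fin m) ℂ) (k l : Fin m) :
    star (col A k) ⬝ᵥ col B l = (Aᴴ * B) k l := by
  simp [col, dotProduct, mul_apply, conjTranspose_apply]

lemma ip_v_col (v : Fin m → ℂ) (A : Matrix (Fin m) (Fin m) ℂ) (k : Fin m) :
    star v ⬝ᵥ col A k = (star v ᵥ* A) k := by
  simp [col, dotProduct, vecMul]

lemma ip_col_v (A : Matrix (Fin m) (Fin m) ℂ) (k : Fin m) (v : Fin m → ℂ) :
    star (col A k) ⬝ᵥ v = (Aᴴ *ᵥ v) k := by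
  simp [col, dotProduct, mulVec, conjTranspose_apply]

lemma infl_tr1 (A : Matrix (Fin m) (Fin m) ℂ) :
    ∑ k, star (col A k) ⬝ᵥ col A k = (A * Aᴴ).trace := by
  simp only [ip_col_col]
  rw [show ∑ k, (Aᴴ * A) k k = (Aᴴ * A).trace from rfl, trace_mul_comm]

lemma infl_tr2 (A B : Matrix (Fin m) (Fin m) ℂ) :
    ∑ k, ∑ l, (star (col A k) ⬝ᵥ col B l) * (star (col B l) ⬝ᵥ col A k)
      = (A * Aᴴ * (B * Bᴴ)).trace := by
  simp only [ip_col_col]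
  rw [Finset.sum_congr rfl fun k _ => (mul_apply (M := Aᴴ * B) (N := Bᴴ * A)).symm]
  rw [show ∑ k, (Aᴴ * B * (Bᴴ * A)) k k = (Aᴴ * B * (Bᴴ * A)).trace from rfl]
  calc (Aᴴ * B * (Bᴴ * A)).trace = (Aᴴ * (B * (Bᴴ * A))).trace := by rw [Matrix.mul_assoc]
    _ = ((B * (Bᴴ * A)) * Aᴴ).trace := trace_mul_comm _ _
    _ = ((B * Bᴴ) * (A * Aᴴ)).trace := by noncomm_ring
    _ = (A * Aᴴ * (B * Bᴴ)).trace := trace_mul_comm _ _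

lemma infl_quad (v : Fin m → ℂ) (A : Matrix (Fin m) (Fin m) ℂ) :
    ∑ k, (star v ⬝ᵥ col A k) * (star (col A k) ⬝ᵥ v) = star v ⬝ᵥ ((A * Aᴴ) *ᵥ v) := by
  simp only [ip_v_col, ip_col_v]
  rw [show ∑ k, (star v ᵥ* A) k * (Aᴴ *ᵥ v) k = (star v ᵥ* A) ⬝ᵥ (Aᴴ *ᵥ v) from rfl]
  rw [← dotProduct_mulVec, mulVec_mulVec]

lemma infl_quad2 (v : Fin m → ℂ) (A B : Matrix (Fin m) (Fin m) ℂ) :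
    ∑ k, ∑ l, (star v ⬝ᵥ col A k) * ((star (col A k) ⬝ᵥ col B l) * (star (col B l) ⬝ᵥ v))
      = star v ⬝ᵥ ((A * Aᴴ * (B * Bᴴ)) *ᵥ v) := by
  simp only [ip_col_col]
  simp only [ip_v_col, ip_col_v]
  have h : ∀ k, ∑ l, (star v ᵥ* A) k * ((Aᴴ * B) k l * (Bᴴ *ᵥ v) l)
      = (star v ᵥ* A) k * ((Aᴴ * B) *ᵥ (Bᴴ *ᵥ v)) k := by
    intro k
    rw [← Finset.mul_sum]
    congr 1
  rw [Finset.sum_congr rfl fun k _ => h k]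
  rw [show ∑ k, (star v ᵥ* A) k * ((Aᴴ * B) *ᵥ (Bᴴ *ᵥ v)) k
      = (star v ᵥ* A) ⬝ᵥ ((Aᴴ * B) *ᵥ (Bᴴ *ᵥ v)) from rfl]
  rw [← dotProduct_mulVec, mulVec_mulVec, mulVec_mulVec]
  congr 2
  noncomm_ring

lemma infl_quad2' (v : Fin m → ℂ) (A B : Matrix (Fin m) (Fin m) ℂ) :
    ∑ k, ((star v ⬝ᵥ col A k) * ∑ l, ((star (col A k) ⬝ᵥ col B l) * (star (col B l) ⬝ᵥ v)))
      = star v ⬝ᵥ ((A * Aᴴ * (B * Bᴴ)) *ᵥ v) := by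
  rw [← infl_quad2 v A B]
  exact Finset.sum_congr rfl fun k _ => Finset.mul_sum _ _ _

/-- folded form of the cyclic triple inflation -/
lemma infl_cyc (A B C : Matrix (Fin m) (Fin m) ℂ) :
    ∑ k, ∑ l, (star (col A k) ⬝ᵥ col B l) *
        ∑ n, (star (col B l) ⬝ᵥ col C n) * (star (col C n) ⬝ᵥ col A k)
      = (A * Aᴴ * (B * Bᴴ) * (C * Cᴴ)).trace := by
  simp only [ip_col_col]
  have h1 : ∀ k l, (Aᴴ * B) k l * ∑ n, ((Bᴴ * C) l n * (Cᴴ * A) n k)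
      = (Aᴴ * B) k l * ((Bᴴ * C) * (Cᴴ * A)) l k := by
    intro k l
    congr 1
  rw [Finset.sum_congr rfl fun k _ => Finset.sum_congr rfl fun l _ => h1 k l]
  rw [Finset.sum_congr rfl fun k _ =>
    (mul_apply (M := Aᴴ * B) (N := (Bᴴ * C) * (Cᴴ * A))).symm]
  rw [show ∑ k, ((Aᴴ * B) * ((Bᴴ * C) * (Cᴴ * A))) k k
      = ((Aᴴ * B) * ((Bᴴ * C) * (Cᴴ * A))).trace from rfl]
  calc ((Aᴴ * B) * ((Bᴴ * C) * (Cᴴ * A))).trace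
      = (Aᴴ * (B * ((Bᴴ * C) * (Cᴴ * A)))).trace := by rw [Matrix.mul_assoc]
    _ = ((B * ((Bᴴ * C) * (Cᴴ * A))) * Aᴴ).trace := trace_mul_comm _ _
    _ = ((B * Bᴴ * (C * Cᴴ)) * (A * Aᴴ)).trace := by noncomm_ring
    _ = ((A * Aᴴ) * (B * Bᴴ * (C * Cᴴ))).trace := trace_mul_comm _ _
    _ = (A * Aᴴ * (B * Bᴴ) * (C * Cᴴ)).trace := by noncomm_ring

lemma gram (ω : ℂ) (hω3 : ω ^ 3 = 1) (hωc : conj ω = ω ^ 2) (u : Fin 4 → Fin m → ℂ) :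
    ∑ f : Fin 4 → Fin m,
      conj (∑ r, conj (ω ^ c3 r) * ∏ i, u (ptab r i) (f i)) *
        (∑ r, conj (ω ^ c3 r) * ∏ i, u (ptab r i) (f i))
      = 12 * ∑ r, conj (ω ^ c3 r) * ∏ i, (star (u i) ⬝ᵥ u (ptab r i)) := by
  have hpow : ∀ a : ℕ, ω ^ a = ω ^ (a % 3) := by
    intro a
    conv_lhs => rw [← Nat.div_add_mod a 3]
    rw [pow_add, pow_mul, hω3, one_pow, one_mul]
  have hcoef : ∀ s t, ω ^ c3 s * conj (ω ^ c3 t) = conj (ω ^ c3 (rtab t s)) := by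
    intro s t
    rw [map_pow, map_pow, hωc, ← pow_mul, ← pow_mul, ← pow_add, hpow (c3 s + 2 * c3 t),
      hc3 t s, ← hpow]
  have ipdef : ∀ a b : Fin m → ℂ, star a ⬝ᵥ b = ∑ j, conj (a j) * b j := by
    intro a b; rfl
  calc ∑ f : Fin 4 → Fin m, conj (∑ r, conj (ω ^ c3 r) * ∏ i, u (ptab r i) (f i)) *
          (∑ r, conj (ω ^ c3 r) * ∏ i, u (ptab r i) (f i))
      = ∑ f : Fin 4 → Fin m, ∑ s, ∑ t, (ω ^ c3 s * conj (ω ^ c3 t)) *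
          ∏ i, (conj (u (ptab s i) (f i)) * u (ptab t i) (f i)) := by
        refine Finset.sum_congr rfl fun f _ => ?_
        rw [map_sum, Finset.sum_mul_sum]
        refine Finset.sum_congr rfl fun s _ => Finset.sum_congr rfl fun t _ => ?_
        rw [_root_.map_mul, map_prod, Complex.conj_conj, Finset.prod_mul_distrib]
        ring
    _ = ∑ s, ∑ t, (ω ^ c3 s * conj (ω ^ c3 t)) *
          ∏ i, ∑ j, conj (u (ptab s i) j) * u (ptab t i) j := by
        rw [Finset.sum_comm]
        refine Finset.sum_congr rfl fun s _ => ?_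
        rw [Finset.sum_comm]
        refine Finset.sum_congr rfl fun t _ => ?_
        rw [← Finset.mul_sum]
        congr 1
        exact (Fintype.prod_sum (f := fun i j => conj (u (ptab s i) j) * u (ptab t i) j)).symm
    _ = ∑ s, ∑ t, conj (ω ^ c3 (rtab t s)) * ∏ i, (star (u i) ⬝ᵥ u (ptab (rtab t s) i)) := by
        refine Finset.sum_congr rfl fun s _ => Finset.sum_congr rfl fun t _ => ?_
        rw [hcoef]
        congr 1
        calc ∏ i, ∑ j, conj (u (ptab s i) j) * u (ptab t i) j
            = ∏ i, (star (u (ptab s i)) ⬝ᵥ u (ptab t i)) := by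
              refine Finset.prod_congr rfl fun i _ => (ipdef _ _).symm
          _ = ∏ i, star (u i) ⬝ᵥ u (ptab (rtab t s) i) :=
              Fintype.prod_bijective (ptab s) (hpbij s) _ _ (fun i => by rw [hcomp t s i])
    _ = ∑ s : Fin 12, ∑ r, conj (ω ^ c3 r) * ∏ i, (star (u i) ⬝ᵥ u (ptab r i)) := by
        refine Finset.sum_congr rfl fun s _ => ?_
        exact (hbij s).sum_comp (fun r => conj (ω ^ c3 r) * ∏ i, star (u i) ⬝ᵥ u (ptab r i))
    _ = 12 * ∑ r, conj (ω ^ c3 r) * ∏ i, (star (u i) ⬝ᵥ u (ptab r i)) := by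
        rw [Finset.sum_const, Finset.card_univ, Fintype.card_fin, nsmul_eq_mul]
        norm_num

lemma c1point (ω : ℂ) (hω3 : ω ^ 3 = 1) (hωc : conj ω = ω ^ 2)
    (v a1 a2 a3 : Fin m → ℂ) :
    ∑ r : Fin 12, conj (ω ^ c3 r) * ∏ i, (star (![v,a1,a2,a3] i) ⬝ᵥ ![v,a1,a2,a3] (ptab r i))
    = (star a1 ⬝ᵥ a1) * ((star a2 ⬝ᵥ a2) * ((star a3 ⬝ᵥ a3) * (star v ⬝ᵥ v)))
    + ((star v ⬝ᵥ a1) * (star a1 ⬝ᵥ v)) * ((star a2 ⬝ᵥ a3) * (star a3 ⬝ᵥ a2))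
    + ((star v ⬝ᵥ a2) * (star a2 ⬝ᵥ v)) * ((star a1 ⬝ᵥ a3) * (star a3 ⬝ᵥ a1))
    + ((star v ⬝ᵥ a3) * (star a3 ⬝ᵥ v)) * ((star a1 ⬝ᵥ a2) * (star a2 ⬝ᵥ a1))
    + conj ω * ((star v ⬝ᵥ v) * ((star a1 ⬝ᵥ a2) * ((star a2 ⬝ᵥ a3) * (star a3 ⬝ᵥ a1))))
    + conj ω * (((star v ⬝ᵥ a2) * ((star a2 ⬝ᵥ a1) * (star a1 ⬝ᵥ v))) * (star a3 ⬝ᵥ a3))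
    + conj ω * (((star v ⬝ᵥ a3) * ((star a3 ⬝ᵥ a2) * (star a2 ⬝ᵥ v))) * (star a1 ⬝ᵥ a1))
    + conj ω * (((star v ⬝ᵥ a1) * ((star a1 ⬝ᵥ a3) * (star a3 ⬝ᵥ v))) * (star a2 ⬝ᵥ a2))
    + ω * ((star v ⬝ᵥ v) * ((star a1 ⬝ᵥ a3) * ((star a3 ⬝ᵥ a2) * (star a2 ⬝ᵥ a1))))
    + ω * (((star v ⬝ᵥ a1) * ((star a1 ⬝ᵥ a2) * (star a2 ⬝ᵥ v))) * (star a3 ⬝ᵥ a3))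
    + ω * (((star v ⬝ᵥ a2) * ((star a2 ⬝ᵥ a3) * (star a3 ⬝ᵥ v))) * (star a1 ⬝ᵥ a1))
    + ω * (((star v ⬝ᵥ a3) * ((star a3 ⬝ᵥ a1) * (star a1 ⬝ᵥ v))) * (star a2 ⬝ᵥ a2)) := by
  have hc2 : conj (ω ^ 2) = ω := by
    rw [map_pow, hωc, ← pow_mul]
    rw [show (2 * 2 : ℕ) = 3 + 1 from rfl, pow_add, hω3, one_mul, pow_one]
  rw [sum12]
  simp only [Fin.prod_univ_four, show ptab 0 0 = 0 from by decide, show ptab 0 1 = 1 from by decide, show ptab 0 2 = 2 from by decide, show ptab 0 3 = 3 from by decide, show ptab 1 0 = 1 from by decide, show ptab 1 1 = 0 from by decide, show ptab 1 2 = 3 from by decide, show ptab 1 3 = 2 from by decide, show ptab 2 0 = 2 from by decide, show ptab 2 1 = 3 from by decide, show ptab 2 2 = 0 from by decide, show ptab 2 3 = 1 from by decide, show ptab 3 0 = 3 from by decide, show ptab 3 1 = 2 from by decide, show ptab 3 2 = 1 from by decide, show ptab 3 3 = 0 from by decide, show ptab 4 0 = 0 from by decide, show ptab 4 1 = 2 from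 by decide, show ptab 4 2 = 3 from by decide, show ptab 4 3 = 1 from by decide, show ptab 5 0 = 2 from by decide, show ptab 5 1 = 0 from by decide, show ptab 5 2 = 1 from by decide, show ptab 5 3 = 3 from by decide, show ptab 6 0 = 3 from by decide, show ptab 6 1 = 1 from by decide, show ptab 6 2 = 0 from by decide, show ptab 6 3 = 2 from by decide, show ptab 7 0 = 1 from by decide, show ptab 7 1 = 3 from by decide, show ptab 7 2 = 2 from by decide, show ptab 7 3 = 0 from by decide, show ptab 8 0 = 0 from by decide, show ptab 8 1 = 3 from by decide, show ptab 8 2 = 1 from by decide, show ptab 8 3 = 2 from by decide, show ptab 9 0 = 1 from by decide, show ptab 9 1 = 2 from by decide, show ptab 9 2 = 0 from by decide, show ptab 9 3 = 3 from by decide, show ptab 10 0 = 2 from by decide, show ptab 10 1 = 1 from by decide, show ptab 10 2 = 3 from by decide, show ptab 10 3 = 0 from by decide, show ptab 11 0 = 3 from by decide, show ptab 11 1 = 0 from by decide, show ptab 11 2 = 2 from by decide, show ptab 11 3 = 1 from by decide, show c3 0 = 0 from by decide, show c3 1 = 0 from by decide, show c3 2 = 0 from by decide, show c3 3 = 0 from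 by decide, show c3 4 = 1 from by decide, show c3 5 = 1 from by decide, show c3 6 = 1 from by decide, show c3 7 = 1 from by decide, show c3 8 = 2 from by decide, show c3 9 = 2 from by decide, show c3 10 = 2 from by decide, show c3 11 = 2 from by decide]
  simp only [Matrix.cons_val_zero, Matrix.cons_val_one,
    Matrix.cons_val_two, Matrix.cons_val_three, Matrix.tail_cons, Matrix.head_cons,
    pow_zero, pow_one, _root_.map_one, hc2]
  ring

end A4Ineq

open A4Ineq

/-- For PSD matrices `X, Y, Z` of trace one, with `ω = e^{2πi/3}`,
`L = tr(XY)Z + tr(XZ)Y + tr(YZ)X` and `M = tr(ZYX)·I + XY + YZ + ZX`, the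
matrix `I + L + ωM + ω̄M*` is positive semidefinite. -/
theorem a4_degree_one_inequality (m : ℕ) (X Y Z : Matrix (Fin m) (Fin m) ℂ)
    (hX : X.PosSemidef) (hY : Y.PosSemidef) (hZ : Z.PosSemidef)
    (htX : X.trace = 1) (htY : Y.trace = 1) (htZ : Z.trace = 1)
    (ω : ℂ) (hω : ω = Complex.exp (2 * Real.pi * Complex.I / 3))
    (L M : Matrix (Fin m) (Fin m) ℂ)
    (hL : L = (X * Y).trace • Z + (X * Z).trace • Y + (Y * Z).trace • X)
    (hM : M = (Z * Y * X).trace • (1 : Matrix (Fin m) (Fin m) ℂ)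
      + X * Y + Y * Z + Z * X) :
    ((1 : Matrix (Fin m) (Fin m) ℂ) + L + ω • M + (conj ω) • Mᴴ).PosSemidef := by
  have hω3 : ω ^ 3 = 1 := by
    rw [hω, ← Complex.exp_nat_mul]
    rw [show (3 : ℕ) * (2 * (Real.pi : ℂ) * Complex.I / 3) = 2 * Real.pi * Complex.I by
      push_cast; ring]
    exact Complex.exp_two_pi_mul_I
  have hωc : conj ω = ω ^ 2 := by
    have hne : ω ≠ 0 := by rw [hω]; exact Complex.exp_ne_zero _
    have h1 : conj ω * ω = 1 := by
      rw [hω, ← Complex.exp_conj, ← Complex.exp_add]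
      rw [show conj (2 * (Real.pi:ℂ) * Complex.I / 3) = -(2 * (Real.pi:ℂ) * Complex.I / 3) by
        simp [map_div₀, _root_.map_mul, Complex.conj_ofReal, Complex.conj_I, map_ofNat]; ring]
      rw [neg_add_cancel]; exact Complex.exp_zero
    have h2 : ω ^ 2 * ω = 1 := by rw [← pow_succ]; exact hω3
    calc conj ω = conj ω * ω * ω⁻¹ := by field_simp
      _ = ω ^ 2 * ω * ω⁻¹ := by rw [h1, h2]
      _ = ω ^ 2 := by field_simp
  have trbar : ∀ (P Q : Matrix (Fin m) (Fin m) ℂ), Pᴴ = P → Qᴴ = Q →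
      star ((P * Q).trace) = (P * Q).trace := by
    intro P Q hP hQ
    rw [← trace_conjTranspose, conjTranspose_mul, hP, hQ, trace_mul_comm]
  have hLh : Lᴴ = L := by
    rw [hL]
    rw [conjTranspose_add, conjTranspose_add, conjTranspose_smul, conjTranspose_smul,
      conjTranspose_smul, hX.1, hY.1, hZ.1, trbar X Y hX.1 hY.1, trbar X Z hX.1 hZ.1,
      trbar Y Z hY.1 hZ.1]
  rw [posSemidef_iff_dotProduct_mulVec]
  constructor
  · show _ᴴ = _
    rw [conjTranspose_add, conjTranspose_add, conjTranspose_add, conjTranspose_one,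
      conjTranspose_smul, conjTranspose_smul, conjTranspose_conjTranspose, hLh]
    rw [show star (conj ω) = ω from by rw [starRingEnd_apply, star_star],
      show star ω = conj ω from rfl]
    abel
  intro v
  -- square roots
  open scoped MatrixOrder in
  set A := CFC.sqrt X with hA
  open scoped MatrixOrder in
  set B := CFC.sqrt Y with hB
  open scoped MatrixOrder in
  set C := CFC.sqrt Z with hC
  have hAX : A * Aᴴ = X := by
    open scoped MatrixOrder in
    rw [show Aᴴ = A from (CFC.sqrt_nonneg X).isSelfAdjoint.star_eq]; exact CFC.sqrt_mul_sqrt_self X hX.nonneg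
  have hBY : B * Bᴴ = Y := by
    open scoped MatrixOrder in
    rw [show Bᴴ = B from (CFC.sqrt_nonneg Y).isSelfAdjoint.star_eq]; exact CFC.sqrt_mul_sqrt_self Y hY.nonneg
  have hCZ : C * Cᴴ = Z := by
    open scoped MatrixOrder in
    rw [show Cᴴ = C from (CFC.sqrt_nonneg Z).isSelfAdjoint.star_eq]; exact CFC.sqrt_mul_sqrt_self Z hZ.nonneg
  -- the twelve closed forms
  have h0 : ∑ k, ∑ l, ∑ n, (star (col A k) ⬝ᵥ col A k) * ((star (col B l) ⬝ᵥ col B l) *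
        ((star (col C n) ⬝ᵥ col C n) * (star v ⬝ᵥ v)))
      = X.trace * (Y.trace * (Z.trace * (star v ⬝ᵥ v))) := by
    simp only [← Finset.mul_sum, ← Finset.sum_mul]
    rw [infl_tr1, infl_tr1, infl_tr1, hAX, hBY, hCZ]
  have h1 : ∑ k, ∑ l, ∑ n, ((star v ⬝ᵥ col A k) * (star (col A k) ⬝ᵥ v)) *
        ((star (col B l) ⬝ᵥ col C n) * (star (col C n) ⬝ᵥ col B l))
      = (star v ⬝ᵥ (X *ᵥ v)) * (Y * Z).trace := by
    simp only [← Finset.mul_sum, ← Finset.sum_mul]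
    rw [infl_quad, infl_tr2, hAX, hBY, hCZ]
  have h2 : ∑ k, ∑ l, ∑ n, ((star v ⬝ᵥ col B l) * (star (col B l) ⬝ᵥ v)) *
        ((star (col A k) ⬝ᵥ col C n) * (star (col C n) ⬝ᵥ col A k))
      = (star v ⬝ᵥ (Y *ᵥ v)) * (X * Z).trace := by
    simp only [← Finset.mul_sum, ← Finset.sum_mul]
    rw [infl_quad, infl_tr2, hAX, hBY, hCZ]
  have h3 : ∑ k, ∑ l, ∑ n, ((star v ⬝ᵥ col C n) * (star (col C n) ⬝ᵥ v)) *
        ((star (col A k) ⬝ᵥ col B l) * (star (col B l) ⬝ᵥ col A k))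
      = (star v ⬝ᵥ (Z *ᵥ v)) * (X * Y).trace := by
    simp only [← Finset.mul_sum, ← Finset.sum_mul]
    rw [infl_quad, infl_tr2, hAX, hBY, hCZ]
  have h4 : ∑ k, ∑ l, ∑ n, conj ω * ((star v ⬝ᵥ v) * ((star (col A k) ⬝ᵥ col B l) *
        ((star (col B l) ⬝ᵥ col C n) * (star (col C n) ⬝ᵥ col A k))))
      = conj ω * ((star v ⬝ᵥ v) * (X * Y * Z).trace) := by
    simp only [← Finset.mul_sum, ← Finset.sum_mul]
    rw [infl_cyc, hAX, hBY, hCZ]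
  have h5 : ∑ k, ∑ l, ∑ n, conj ω * (((star v ⬝ᵥ col B l) * ((star (col B l) ⬝ᵥ col A k) *
        (star (col A k) ⬝ᵥ v))) * (star (col C n) ⬝ᵥ col C n))
      = conj ω * ((star v ⬝ᵥ ((Y * X) *ᵥ v)) * Z.trace) := by
    simp only [← Finset.mul_sum, ← Finset.sum_mul]
    rw [Finset.sum_comm]
    rw [infl_quad2, infl_tr1, hAX, hBY, hCZ]
  have h6 : ∑ k, ∑ l, ∑ n, conj ω * (((star v ⬝ᵥ col C n) * ((star (col C n) ⬝ᵥ col B l) *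
        (star (col B l) ⬝ᵥ v))) * (star (col A k) ⬝ᵥ col A k))
      = conj ω * ((star v ⬝ᵥ ((Z * Y) *ᵥ v)) * X.trace) := by
    simp only [← Finset.mul_sum, ← Finset.sum_mul]
    rw [Finset.sum_comm]
    rw [infl_quad2, infl_tr1, hAX, hBY, hCZ]
  have h7 : ∑ k, ∑ l, ∑ n, conj ω * (((star v ⬝ᵥ col A k) * ((star (col A k) ⬝ᵥ col C n) *
        (star (col C n) ⬝ᵥ v))) * (star (col B l) ⬝ᵥ col B l))
      = conj ω * ((star v ⬝ᵥ ((X * Z) *ᵥ v)) * Y.trace) := by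
    simp only [← Finset.mul_sum, ← Finset.sum_mul]
    rw [infl_quad2', infl_tr1, hAX, hBY, hCZ]
  have h8 : ∑ k, ∑ l, ∑ n, ω * ((star v ⬝ᵥ v) * ((star (col A k) ⬝ᵥ col C n) *
        ((star (col C n) ⬝ᵥ col B l) * (star (col B l) ⬝ᵥ col A k))))
      = ω * ((star v ⬝ᵥ v) * (X * Z * Y).trace) := by
    rw [Finset.sum_congr rfl fun k _ => Finset.sum_comm]
    simp only [← Finset.mul_sum, ← Finset.sum_mul]
    rw [infl_cyc, hAX, hBY, hCZ]
  have h9 : ∑ k, ∑ l, ∑ n, ω * (((star v ⬝ᵥ col A k) * ((star (col A k) ⬝ᵥ col B l) *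
        (star (col B l) ⬝ᵥ v))) * (star (col C n) ⬝ᵥ col C n))
      = ω * ((star v ⬝ᵥ ((X * Y) *ᵥ v)) * Z.trace) := by
    simp only [← Finset.mul_sum, ← Finset.sum_mul]
    rw [infl_quad2', infl_tr1, hAX, hBY, hCZ]
  have h10 : ∑ k, ∑ l, ∑ n, ω * (((star v ⬝ᵥ col B l) * ((star (col B l) ⬝ᵥ col C n) *
        (star (col C n) ⬝ᵥ v))) * (star (col A k) ⬝ᵥ col A k))
      = ω * ((star v ⬝ᵥ ((Y * Z) *ᵥ v)) * X.trace) := by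
    simp only [← Finset.mul_sum, ← Finset.sum_mul]
    rw [infl_quad2', infl_tr1, hAX, hBY, hCZ]
  have h11 : ∑ k, ∑ l, ∑ n, ω * (((star v ⬝ᵥ col C n) * ((star (col C n) ⬝ᵥ col A k) *
        (star (col A k) ⬝ᵥ v))) * (star (col B l) ⬝ᵥ col B l))
      = ω * ((star v ⬝ᵥ ((Z * X) *ᵥ v)) * Y.trace) := by
    simp only [← Finset.mul_sum, ← Finset.sum_mul]
    rw [Finset.sum_comm]
    rw [infl_quad2, infl_tr1, hAX, hBY, hCZ]
  -- sum of the twelve closed forms equals the quadratic form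
  have hMH : Mᴴ = (X * Y * Z).trace • (1 : Matrix (Fin m) (Fin m) ℂ)
      + Y * X + Z * Y + X * Z := by
    rw [hM]
    rw [conjTranspose_add, conjTranspose_add, conjTranspose_add, conjTranspose_smul,
      conjTranspose_one, conjTranspose_mul, conjTranspose_mul, conjTranspose_mul,
      hX.1, hY.1, hZ.1]
    congr 2
    rw [← trace_conjTranspose, conjTranspose_mul, conjTranspose_mul, hX.1, hY.1, hZ.1,
      ← Matrix.mul_assoc]
  have hq : star v ⬝ᵥ ((1 + L + ω • M + conj ω • Mᴴ) *ᵥ v)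
      = (star v ⬝ᵥ v) + (X * Y).trace * (star v ⬝ᵥ (Z *ᵥ v))
        + (X * Z).trace * (star v ⬝ᵥ (Y *ᵥ v)) + (Y * Z).trace * (star v ⬝ᵥ (X *ᵥ v))
        + ω * ((Z * Y * X).trace * (star v ⬝ᵥ v) + star v ⬝ᵥ ((X * Y) *ᵥ v)
          + star v ⬝ᵥ ((Y * Z) *ᵥ v) + star v ⬝ᵥ ((Z * X) *ᵥ v))
        + conj ω * ((X * Y * Z).trace * (star v ⬝ᵥ v) + star v ⬝ᵥ ((Y * X) *ᵥ v)
          + star v ⬝ᵥ ((Z * Y) *ᵥ v) + star v ⬝ᵥ ((X * Z) *ᵥ v)) := by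
    rw [hL, hMH, hM]
    simp only [add_mulVec, smul_mulVec, one_mulVec, dotProduct_add,
      dotProduct_smul, smul_eq_mul]
    ring
  have htrXZY : (X * Z * Y).trace = (Z * Y * X).trace := by
    rw [Matrix.mul_assoc, trace_mul_comm]
  -- main identity
  have hqW : ∑ k : Fin m, ∑ l : Fin m, ∑ n : Fin m,
      (∑ r : Fin 12, conj (ω ^ c3 r) *
        ∏ i, (star (![v, col A k, col B l, col C n] i) ⬝ᵥ
          ![v, col A k, col B l, col C n] (ptab r i)))
      = star v ⬝ᵥ ((1 + L + ω • M + conj ω • Mᴴ) *ᵥ v) := by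
    calc ∑ k : Fin m, ∑ l : Fin m, ∑ n : Fin m,
        (∑ r : Fin 12, conj (ω ^ c3 r) *
          ∏ i, (star (![v, col A k, col B l, col C n] i) ⬝ᵥ
            ![v, col A k, col B l, col C n] (ptab r i)))
        = ∑ k : Fin m, ∑ l : Fin m, ∑ n : Fin m,
          ((star (col A k) ⬝ᵥ col A k) * ((star (col B l) ⬝ᵥ col B l) *
            ((star (col C n) ⬝ᵥ col C n) * (star v ⬝ᵥ v)))
          + ((star v ⬝ᵥ col A k) * (star (col A k) ⬝ᵥ v)) *
            ((star (col B l) ⬝ᵥ col C n) * (star (col C n) ⬝ᵥ col B l))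
          + ((star v ⬝ᵥ col B l) * (star (col B l) ⬝ᵥ v)) *
            ((star (col A k) ⬝ᵥ col C n) * (star (col C n) ⬝ᵥ col A k))
          + ((star v ⬝ᵥ col C n) * (star (col C n) ⬝ᵥ v)) *
            ((star (col A k) ⬝ᵥ col B l) * (star (col B l) ⬝ᵥ col A k))
          + conj ω * ((star v ⬝ᵥ v) * ((star (col A k) ⬝ᵥ col B l) *
            ((star (col B l) ⬝ᵥ col C n) * (star (col C n) ⬝ᵥ col A k))))
          + conj ω * (((star v ⬝ᵥ col B l) * ((star (col B l) ⬝ᵥ col A k) *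
            (star (col A k) ⬝ᵥ v))) * (star (col C n) ⬝ᵥ col C n))
          + conj ω * (((star v ⬝ᵥ col C n) * ((star (col C n) ⬝ᵥ col B l) *
            (star (col B l) ⬝ᵥ v))) * (star (col A k) ⬝ᵥ col A k))
          + conj ω * (((star v ⬝ᵥ col A k) * ((star (col A k) ⬝ᵥ col C n) *
            (star (col C n) ⬝ᵥ v))) * (star (col B l) ⬝ᵥ col B l))
          + ω * ((star v ⬝ᵥ v) * ((star (col A k) ⬝ᵥ col C n) *
            ((star (col C n) ⬝ᵥ col B l) * (star (col B l) ⬝ᵥ col A k))))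
          + ω * (((star v ⬝ᵥ col A k) * ((star (col A k) ⬝ᵥ col B l) *
            (star (col B l) ⬝ᵥ v))) * (star (col C n) ⬝ᵥ col C n))
          + ω * (((star v ⬝ᵥ col B l) * ((star (col B l) ⬝ᵥ col C n) *
            (star (col C n) ⬝ᵥ v))) * (star (col A k) ⬝ᵥ col A k))
          + ω * (((star v ⬝ᵥ col C n) * ((star (col C n) ⬝ᵥ col A k) *
            (star (col A k) ⬝ᵥ v))) * (star (col B l) ⬝ᵥ col B l))) := by
          exact Finset.sum_congr rfl fun k _ => Finset.sum_congr rfl fun l _ =>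
            Finset.sum_congr rfl fun n _ =>
              c1point ω hω3 hωc v (col A k) (col B l) (col C n)
      _ = star v ⬝ᵥ ((1 + L + ω • M + conj ω • Mᴴ) *ᵥ v) := by
          simp only [Finset.sum_add_distrib]
          rw [h0, h1, h2, h3, h4, h5, h6, h7, h8, h9, h10, h11, hq, htrXZY, htX, htY, htZ]
          ring
  -- positivity via the Gram form
  have hpos : (0:ℂ) ≤ 12 * (star v ⬝ᵥ ((1 + L + ω • M + conj ω • Mᴴ) *ᵥ v)) := by
    have e1 : 12 * (star v ⬝ᵥ ((1 + L + ω • M + conj ω • Mᴴ) *ᵥ v))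
        = ∑ k : Fin m, ∑ l : Fin m, ∑ n : Fin m, ∑ f : Fin 4 → Fin m,
          conj (∑ r, conj (ω ^ c3 r) * ∏ i, (![v, col A k, col B l, col C n]) (ptab r i) (f i)) *
            (∑ r, conj (ω ^ c3 r) * ∏ i, (![v, col A k, col B l, col C n]) (ptab r i) (f i)) := by
      rw [← hqW, Finset.mul_sum]
      refine Finset.sum_congr rfl fun k _ => ?_
      rw [Finset.mul_sum]
      refine Finset.sum_congr rfl fun l _ => ?_
      rw [Finset.mul_sum]
      refine Finset.sum_congr rfl fun n _ => ?_
      exact (gram ω hω3 hωc (![v, col A k, col B l, col C n])).symm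
    rw [e1]
    refine Finset.sum_nonneg fun k _ => Finset.sum_nonneg fun l _ =>
      Finset.sum_nonneg fun n _ => Finset.sum_nonneg fun f _ => ?_
    rw [starRingEnd_apply]
    exact star_mul_self_nonneg _
  rw [Complex.le_def] at hpos
  rw [Complex.le_def]
  constructor
  · have := hpos.1
    simp only [Complex.zero_re, Complex.mul_re, Complex.re_ofNat, Complex.im_ofNat,
      Complex.zero_im] at this ⊢
    linarith
  · have := hpos.2
    simp only [Complex.zero_im, Complex.mul_im, Complex.re_ofNat, Complex.im_ofNat] at this ⊢
    linarith
end

section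
/- Permanent dominance for n = 3, the standard representation: for every positive semidefinite 3×3 complex matrix A, per(A) ≥ imm_{(2,1)}(A)/2, where imm_{(2,1)}(A) = 2∏_i A_{ii} − A_{11}A_{23}A_{32} − A_{22}A_{13}A_{31} − A_{33}A_{12}A_{21}. -/
open scoped ComplexOrder

open Matrix


lemma offdiag_bound (A : Matrix (Fin 3) (Fin 3) ℂ) (hA : A.PosSemidef) :
    Complex.normSq (A 0 2) ≤ (A 0 0).re * (A 2 2).re := by
  set c := A 0 2 with hc
  set nc := Complex.normSq c with hnc
  have hd0 : ((A 0 0).re : ℂ) = A 0 0 := hA.1.coe_re_apply_self 0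
  have hd2 : ((A 2 2).re : ℂ) = A 2 2 := hA.1.coe_re_apply_self 2
  have h20 : A 2 0 = (starRingEnd ℂ) c := by rw [← hA.1.apply 2 0]; rfl
  have key : ∀ t : ℝ, 0 ≤ (A 0 0).re * (t * t) + (-2 * nc) * t + nc * (A 2 2).re := by
    intro t
    have h := hA.dotProduct_mulVec_nonneg ![(t : ℂ), 0, -(starRingEnd ℂ) c]
    have hdot : star ![(t : ℂ), 0, -(starRingEnd ℂ) c] ⬝ᵥ
        A *ᵥ ![(t : ℂ), 0, -(starRingEnd ℂ) c] =
        (((A 0 0).re * (t * t) + (-2 * nc) * t + nc * (A 2 2).re : ℝ) : ℂ) := by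
      simp only [dotProduct, Matrix.mulVec, Fin.sum_univ_three, Pi.star_apply,
        Matrix.cons_val_zero, Matrix.cons_val_one, Matrix.head_cons,
        Matrix.cons_val_two, Matrix.tail_cons, star_neg]
      rw [h20]
      rw [← hd0, ← hd2]
      simp only [Complex.star_def, Complex.conj_conj, Complex.conj_ofReal, map_zero, Complex.ofReal_re]
      push_cast
      linear_combination ((-2*(t:ℂ) + ((A 2 2).re : ℂ))) * Complex.mul_conj c
    rw [hdot] at h
    exact_mod_cast (Complex.le_def.mp h).1
  have hdisc := discrim_le_zero key
  have hnc0 : 0 ≤ nc := Complex.normSq_nonneg c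
  have hd0' : 0 ≤ (A 0 0).re := by
    have h := hA.dotProduct_mulVec_nonneg (Pi.single 0 1)
    have := (Complex.le_def.mp h).1
    simpa [dotProduct, Matrix.mulVec, Fin.sum_univ_three, Pi.single_apply] using this
  have hd2' : 0 ≤ (A 2 2).re := by
    have h := hA.dotProduct_mulVec_nonneg (Pi.single 2 1)
    have := (Complex.le_def.mp h).1
    simpa [dotProduct, Matrix.mulVec, Fin.sum_univ_three, Pi.single_apply] using this
  rw [discrim] at hdisc
  nlinarith [hdisc, hnc0, mul_nonneg hd0' hd2',
    sq_nonneg (nc - (A 0 0).re * (A 2 2).re)]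


lemma perm3_key_real (d0 d1 d2 : ℝ) (a b c : ℂ) (h0 : 0 ≤ d0) (h1 : 0 ≤ d1) (h2 : 0 ≤ d2)
    (hc : Complex.normSq c ≤ d0 * d2) :
    0 ≤ (3/2) * (d0 * Complex.normSq b + d1 * Complex.normSq c + d2 * Complex.normSq a)
      + 2 * (a * b * (starRingEnd ℂ) c).re := by
  set ra := ‖a‖ with hra
  set rb := ‖b‖ with hrb
  set rc := ‖c‖ with hrc
  have hre : |(a * b * (starRingEnd ℂ) c).re| ≤ ra * rb * rc := by
    calc |(a * b * (starRingEnd ℂ) c).re| ≤ ‖a * b * (starRingEnd ℂ) c‖ :=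
          Complex.abs_re_le_norm _
      _ = ra * rb * rc := by simp [Complex.norm_conj, hra, hrb, hrc]
  have hsa : ra ^ 2 = Complex.normSq a := Complex.sq_norm a
  have hsb : rb ^ 2 = Complex.normSq b := Complex.sq_norm b
  have hsc : rc ^ 2 = Complex.normSq c := Complex.sq_norm c
  set s0 := Real.sqrt d0 with hs0
  set s2 := Real.sqrt d2 with hs2
  have hs0sq : s0 ^ 2 = d0 := Real.sq_sqrt h0
  have hs2sq : s2 ^ 2 = d2 := Real.sq_sqrt h2
  have hrc' : rc ≤ s0 * s2 := by
    rw [hrc, Complex.norm_def, ← Real.sqrt_mul h0]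
    exact Real.sqrt_le_sqrt hc
  have hran : 0 ≤ ra := norm_nonneg a
  have hrbn : 0 ≤ rb := norm_nonneg b
  have hrcn : 0 ≤ rc := norm_nonneg c
  have habs : -(ra * rb * rc) ≤ (a * b * (starRingEnd ℂ) c).re := neg_le_of_abs_le hre
  nlinarith [sq_nonneg (s2 * ra - s0 * rb), mul_nonneg (mul_nonneg hran hrbn) (sub_nonneg.mpr hrc'),
    mul_nonneg h1 (Complex.normSq_nonneg c), mul_nonneg hran hrbn]


/-- Permanent dominance for `n = 3` and the standard representation of `S_3`:
`per(A) ≥ imm_{(2,1)}(A) / 2` for positive semidefinite `A`, where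
`imm_{(2,1)}(A) = 2∏ᵢ Aᵢᵢ − A₁₁A₂₃A₃₂ − A₂₂A₁₃A₃₁ − A₃₃A₁₂A₂₁`. -/
theorem permanent_dominance_three (A : Matrix (Fin 3) (Fin 3) ℂ)
    (hA : A.PosSemidef) :
    (2 * ∏ i, A i i
        - A 0 0 * A 1 2 * A 2 1
        - A 1 1 * A 0 2 * A 2 0
        - A 2 2 * A 0 1 * A 1 0) / 2
      ≤ ∑ σ : Equiv.Perm (Fin 3), ∏ t, A t (σ t) := by
  have hper : ∑ σ : Equiv.Perm (Fin 3), ∏ t, A t (σ t) =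
      A 0 0 * A 1 1 * A 2 2 + A 0 1 * A 1 0 * A 2 2 + A 0 2 * A 1 1 * A 2 0
        + A 0 0 * A 1 2 * A 2 1 + A 0 1 * A 1 2 * A 2 0 + A 0 2 * A 1 0 * A 2 1 := by
    have h : (Finset.univ : Finset (Equiv.Perm (Fin 3))) =
        {1, Equiv.swap 0 1, Equiv.swap 0 2, Equiv.swap 1 2,
          Equiv.swap 0 1 * Equiv.swap 1 2, Equiv.swap 1 2 * Equiv.swap 0 1} := by decide
    rw [h]
    repeat rw [Finset.sum_insert (by decide)]
    rw [Finset.sum_singleton]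
    simp only [Fin.prod_univ_three]
    norm_num [Equiv.swap_apply_def, Equiv.Perm.mul_apply, Fin.ext_iff]
    ring
  set a := A 0 1 with ha
  set b := A 1 2 with hb
  set c := A 0 2 with hc
  have h10 : A 1 0 = (starRingEnd ℂ) a := by rw [← hA.1.apply 1 0]; rfl
  have h21 : A 2 1 = (starRingEnd ℂ) b := by rw [← hA.1.apply 2 1]; rfl
  have h20 : A 2 0 = (starRingEnd ℂ) c := by rw [← hA.1.apply 2 0]; rfl
  have hd0 : ((A 0 0).re : ℂ) = A 0 0 := hA.1.coe_re_apply_self 0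
  have hd1 : ((A 1 1).re : ℂ) = A 1 1 := hA.1.coe_re_apply_self 1
  have hd2 : ((A 2 2).re : ℂ) = A 2 2 := hA.1.coe_re_apply_self 2
  have hd0' : 0 ≤ (A 0 0).re := by
    have h := hA.dotProduct_mulVec_nonneg (Pi.single 0 1)
    have := (Complex.le_def.mp h).1
    simpa [dotProduct, Matrix.mulVec, Fin.sum_univ_three, Pi.single_apply] using this
  have hd1' : 0 ≤ (A 1 1).re := by
    have h := hA.dotProduct_mulVec_nonneg (Pi.single 1 1)
    have := (Complex.le_def.mp h).1
    simpa [dotProduct, Matrix.mulVec, Fin.sum_univ_three, Pi.single_apply] using this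
  have hd2' : 0 ≤ (A 2 2).re := by
    have h := hA.dotProduct_mulVec_nonneg (Pi.single 2 1)
    have := (Complex.le_def.mp h).1
    simpa [dotProduct, Matrix.mulVec, Fin.sum_univ_three, Pi.single_apply] using this
  rw [← sub_nonneg, hper, Fin.prod_univ_three]
  have hdiff : A 0 0 * A 1 1 * A 2 2 + A 0 1 * A 1 0 * A 2 2 + A 0 2 * A 1 1 * A 2 0
        + A 0 0 * A 1 2 * A 2 1 + A 0 1 * A 1 2 * A 2 0 + A 0 2 * A 1 0 * A 2 1
      - (2 * (A 0 0 * A 1 1 * A 2 2)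
        - A 0 0 * A 1 2 * A 2 1
        - A 1 1 * A 0 2 * A 2 0
        - A 2 2 * A 0 1 * A 1 0) / 2 =
      ((3/2) * ((A 0 0).re * Complex.normSq b + (A 1 1).re * Complex.normSq c
          + (A 2 2).re * Complex.normSq a)
        + 2 * (a * b * (starRingEnd ℂ) c).re : ℝ) := by
    rw [h10, h21, h20, ← ha, ← hb, ← hc, ← hd0, ← hd1, ← hd2]
    have ea : a * (starRingEnd ℂ) a = (Complex.normSq a : ℂ) := Complex.mul_conj a
    have eb : b * (starRingEnd ℂ) b = (Complex.normSq b : ℂ) := Complex.mul_conj b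
    have ec : c * (starRingEnd ℂ) c = (Complex.normSq c : ℂ) := Complex.mul_conj c
    have eadd : a * b * (starRingEnd ℂ) c + (starRingEnd ℂ) a * (starRingEnd ℂ) b * c =
        2 * (((a * b * (starRingEnd ℂ) c).re : ℝ) : ℂ) := by
      have := Complex.add_conj (a * b * (starRingEnd ℂ) c)
      simpa [_root_.map_mul, Complex.ofReal_mul] using this
    push_cast [Complex.ofReal_re]
    linear_combination ((3:ℂ)/2) * (((A 0 0).re : ℂ) * eb + ((A 1 1).re : ℂ) * ec
      + ((A 2 2).re : ℂ) * ea) + eadd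
  rw [hdiff]
  rw [Complex.zero_le_real]
  exact perm3_key_real _ _ _ a b c hd0' hd1' hd2' (offdiag_bound A hA)
end

section
/- If f, g : S_n → C satisfy that d_f(A) ≥ d_g(A) (both real) for all positive semidefinite n×n complex matrices A, and α, β ∈ R with α, β ≥ 0, then the matrix-valued function satisfies: for all PSD m×m matrices X_1,...,X_{n-1} and all w ∈ C^m, Σ_σ (f−g)(σ) tr(σ^{-1}(X_1⊗...⊗X_{n-1}⊗|w⟩⟨w|)) ≥ 0. -/
open scoped ComplexOrder
open Matrix

lemma trace_perm_tensor {n m : ℕ} (σ : Equiv.Perm (Fin n))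
    (Y : Fin n → Matrix (Fin m) (Fin m) ℂ) :
    (permMat n σ⁻¹ * tensorMat Y).trace
      = ∑ l : Fin n → Fin m, ∏ i, Y i (l i) (l (σ i)) := by
  classical
  simp only [Matrix.trace, Matrix.diag, Matrix.mul_apply, permMat, tensorMat, Matrix.of_apply]
  rw [Finset.sum_comm]
  refine Finset.sum_congr rfl fun l _ => ?_
  rw [Finset.sum_eq_single (fun i => l (σ i))]
  · simp
  · intro k _ hk
    rw [if_neg, zero_mul]
    simpa using hk
  · simp

lemma sum_prod_eq_gram {n m : ℕ} (σ : Equiv.Perm (Fin n)) (u : Fin n → Fin m → ℂ) :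
    ∑ l : Fin n → Fin m, ∏ i, (starRingEnd ℂ) (u i (l i)) * u i (l (σ i))
      = ∏ t, (∑ a, (starRingEnd ℂ) (u (σ t) a) * u t a) := by
  classical
  have h1 : ∀ l : Fin n → Fin m,
      ∏ i, (starRingEnd ℂ) (u i (l i)) * u i (l (σ i))
        = ∏ i, ((starRingEnd ℂ) (u i (l i)) * u (σ⁻¹ i) (l i)) := by
    intro l
    rw [Finset.prod_mul_distrib, Finset.prod_mul_distrib]
    congr 1
    rw [← Equiv.prod_comp σ (fun i => u (σ⁻¹ i) (l i))]
    simp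
  simp_rw [h1]
  rw [← Fintype.piFinset_univ,
    ← Finset.prod_univ_sum (fun _ => Finset.univ)
      (fun i a => (starRingEnd ℂ) (u i a) * u (σ⁻¹ i) a)]
  rw [← Equiv.prod_comp σ (fun i => ∑ a, (starRingEnd ℂ) (u i a) * u (σ⁻¹ i) a)]
  simp

open scoped MatrixOrder in
lemma psd_exists_sqrt {m : ℕ} {A : Matrix (Fin m) (Fin m) ℂ} (hA : A.PosSemidef) :
    ∃ B : Matrix (Fin m) (Fin m) ℂ, A = Bᴴ * B := by
  obtain ⟨B, hB⟩ := CStarAlgebra.nonneg_iff_eq_star_mul_self.mp hA.nonneg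
  exact ⟨B, hB⟩

/-- If `d_g(A) ≤ d_f(A)` (both real) for all positive semidefinite `A`, then
for all PSD `m × m` matrices `X 0, …, X (n-1)` and every `w ∈ ℂ^m`,
`∑_σ (f−g)(σ) tr(σ⁻¹ · (X 0 ⊗ ⋯ ⊗ X (n-1) ⊗ |w⟩⟨w|)) ≥ 0`. -/
theorem matrix_gmf_dominance (n m : ℕ)
    (f g : Equiv.Perm (Fin (n + 1)) → ℂ)
    (hfg : ∀ A : Matrix (Fin (n + 1)) (Fin (n + 1)) ℂ, A.PosSemidef →
      (∑ σ : Equiv.Perm (Fin (n + 1)), g σ * ∏ t, A t (σ t))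
        ≤ ∑ σ : Equiv.Perm (Fin (n + 1)), f σ * ∏ t, A t (σ t))
    (α β : ℝ) (hα : 0 ≤ α) (hβ : 0 ≤ β)
    (X : Fin n → Matrix (Fin m) (Fin m) ℂ) (hX : ∀ i, (X i).PosSemidef)
    (w : Fin m → ℂ) :
    0 ≤ ∑ σ : Equiv.Perm (Fin (n + 1)), (f σ - g σ) *
        (permMat (n + 1) σ⁻¹ *
          tensorMat (Fin.snoc X (Matrix.vecMulVec w (star w)))).trace := by
  classical
  choose S hS using fun i => psd_exists_sqrt (hX i)
  set v : (Fin n → Fin m) → Fin (n + 1) → Fin m → ℂ :=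
    fun c => Fin.snoc (fun i a => S i (c i) a) (fun a => (starRingEnd ℂ) (w a)) with hv
  set A : (Fin n → Fin m) → Matrix (Fin (n + 1)) (Fin (n + 1)) ℂ :=
    fun c => Matrix.of fun s t => ∑ a, (starRingEnd ℂ) (v c s a) * v c t a with hA
  have hApsd : ∀ c, (A c).PosSemidef := by
    intro c
    have : A c = (Matrix.of fun (a : Fin m) (s : Fin (n + 1)) => v c s a)ᴴ *
        (Matrix.of fun (a : Fin m) (s : Fin (n + 1)) => v c s a) := by
      ext s t
      simp [hA, Matrix.mul_apply, Matrix.conjTranspose_apply]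
    rw [this]
    exact Matrix.posSemidef_conjTranspose_mul_self _
  have hXexp : ∀ (i : Fin n) (a b : Fin m),
      X i a b = ∑ c, (starRingEnd ℂ) (S i c a) * S i c b := by
    intro i a b
    conv_lhs => rw [hS i]
    rw [Matrix.mul_apply]
    refine Finset.sum_congr rfl fun c _ => ?_
    rw [Matrix.conjTranspose_apply, RCLike.star_def]
  have hexp : ∀ σ : Equiv.Perm (Fin (n + 1)),
      (permMat (n + 1) σ⁻¹ *
          tensorMat (Fin.snoc X (Matrix.vecMulVec w (star w)))).trace
        = ∑ c : Fin n → Fin m, ∏ t, A c (σ t) t := by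
    intro σ
    rw [trace_perm_tensor]
    have step1 : ∀ l : Fin (n + 1) → Fin m,
        ∏ i, (Fin.snoc X (Matrix.vecMulVec w (star w)) :
              Fin (n + 1) → Matrix (Fin m) (Fin m) ℂ) i (l i) (l (σ i))
          = ∑ c : Fin n → Fin m,
              ∏ i, (starRingEnd ℂ) (v c i (l i)) * v c i (l (σ i)) := by
      intro l
      have hR : ∀ c : Fin n → Fin m,
          ∏ i, (starRingEnd ℂ) (v c i (l i)) * v c i (l (σ i))
            = (∏ i : Fin n, (starRingEnd ℂ) (S i (c i) (l i.castSucc)) *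
                  S i (c i) (l (σ i.castSucc))) *
              (w (l (Fin.last n)) * (starRingEnd ℂ) (w (l (σ (Fin.last n))))) := by
        intro c
        rw [Fin.prod_univ_castSucc]
        simp [hv, Fin.snoc_castSucc, Fin.snoc_last]
      simp_rw [hR]
      rw [← Finset.sum_mul, Fin.prod_univ_castSucc]
      simp only [Fin.snoc_castSucc, Fin.snoc_last]
      congr 1
      · simp_rw [hXexp]
        rw [Finset.prod_univ_sum (fun _ => Finset.univ)
          (fun (i : Fin n) (c : Fin m) => (starRingEnd ℂ) (S i c (l i.castSucc)) *
            S i c (l (σ i.castSucc)))]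
        rw [Fintype.piFinset_univ]
    simp_rw [step1]
    rw [Finset.sum_comm]
    refine Finset.sum_congr rfl fun c _ => ?_
    rw [sum_prod_eq_gram σ (v c)]
    rfl
  simp_rw [hexp, Finset.mul_sum]
  rw [Finset.sum_comm]
  refine Finset.sum_nonneg fun c _ => ?_
  have h := hfg (A c)ᵀ ((hApsd c).transpose)
  simp only [Matrix.transpose_apply] at h
  simp_rw [sub_mul]
  rw [Finset.sum_sub_distrib]
  exact sub_nonneg.mpr h
end
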